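/- arXiv:2008.03491 — 9 statements merged into one kernel-verified Lean document; each statement's English description precedes it below -/
import Mathlib

section
/- Assume there exist x₊, x₋ ∈ H with [Vx₊,Vx₊]_E > 0 and [Vx₋,Vx₋]_E < 0 (i.e. V^#V is indefinite). Then the following are equivalent: (1) for every x ∈ H with [Vx,Vx]_E = 0 one has [Tx,Tx]_K ≥ 0; (2) there exists ρ ∈ ℝ such that the bounded self-adjoint operator T^#T + ρ·V^#V on H is positive semidefinite. -/
open scoped ComplexInnerProductSpace Pointwise

noncomputable section

variable {H K E : Type*}
  [NormedAddCommGroup H] [InnerProductSpace ℂ H] [CompleteSpace H]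
  [NormedAddCommGroup K] [InnerProductSpace ℂ K] [CompleteSpace K]
  [NormedAddCommGroup E] [InnerProductSpace ℂ E] [CompleteSpace E]

/-- The operator `T^#T + ρ·V^#V = T*∘J_K∘T + ρ·V*∘J_E∘V` on `H`. -/
def smOp (JK : K →L[ℂ] K) (JE : E →L[ℂ] E) (T : H →L[ℂ] K) (V : H →L[ℂ] E) (ρ : ℝ) :
    H →L[ℂ] H :=
  (ContinuousLinearMap.adjoint T) ∘L JK ∘L T +
    (ρ : ℂ) • ((ContinuousLinearMap.adjoint V) ∘L JE ∘L V)

/-- An operator on `H` is positive semidefinite if its quadratic form `⟨Ax,x⟩` is real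
and nonnegative for every `x`. -/
def IsPosSemidef (A : H →L[ℂ] H) : Prop :=
  ∀ x : H, (⟪A x, x⟫).im = 0 ∧ 0 ≤ (⟪A x, x⟫).re

/-- `sm(ρ,z₀)`: the set of global minimizers of
`F_ρ(x) = [Tx,Tx]_K + ρ·[Vx−z₀,Vx−z₀]_E` over `H`. -/
def smSet (JK : K →L[ℂ] K) (JE : E →L[ℂ] E) (T : H →L[ℂ] K) (V : H →L[ℂ] E) (ρ : ℝ)
    (z₀ : E) : Set H :=
  {xt : H | ∀ x : H,
    (⟪JK (T xt), T xt⟫).re + ρ * (⟪JE (V xt - z₀), V xt - z₀⟫).re ≤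
      (⟪JK (T x), T x⟫).re + ρ * (⟪JE (V x - z₀), V x - z₀⟫).re}

/-- `sp(w₀)`: the set of minimizers of `x ↦ [Tx,Tx]_K` subject to `Vx = w₀`. -/
def spSet (JK : K →L[ℂ] K) (T : H →L[ℂ] K) (V : H →L[ℂ] E) (w₀ : E) : Set H :=
  {xt : H | V xt = w₀ ∧ ∀ x : H, V x = w₀ →
    (⟪JK (T xt), T xt⟫).re ≤ (⟪JK (T x), T x⟫).re}

/-- `R(L)^[⊥]`: the `[·,·]_ρ`-orthogonal companion of the range of `L = (T,V)`. -/
def RLperp (JK : K →L[ℂ] K) (JE : E →L[ℂ] E) (T : H →L[ℂ] K) (V : H →L[ℂ] E) (ρ : ℝ) :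
    Set (K × E) :=
  {p : K × E | ∀ x : H, ⟪JK (T x), p.1⟫ + (ρ : ℂ) * ⟪JE (V x), p.2⟫ = 0}

/-- `N₀ = ker V ∩ ((T^#T)(ker V))^⊥`. -/
def N0 (JK : K →L[ℂ] K) (T : H →L[ℂ] K) (V : H →L[ℂ] E) : Submodule ℂ H :=
  LinearMap.ker (V : H →ₗ[ℂ] E) ⊓
    (Submodule.map (((ContinuousLinearMap.adjoint T) ∘L JK ∘L T : H →L[ℂ] H) : H →ₗ[ℂ] H)
      (LinearMap.ker (V : H →ₗ[ℂ] E)))ᗮ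

section Helpers

variable {F : Type*} [NormedAddCommGroup F] [InnerProductSpace ℂ F] [CompleteSpace F]

lemma symm_inner (J : F →L[ℂ] F) (hJ : IsSelfAdjoint J) (y z : F) :
    ⟪J y, z⟫ = ⟪y, J z⟫ :=
  (ContinuousLinearMap.isSelfAdjoint_iff_isSymmetric.mp hJ) y z

lemma im_zero (J : F →L[ℂ] F) (hJ : IsSelfAdjoint J) (y : F) :
    (⟪J y, y⟫).im = 0 := by
  have h : (starRingEnd ℂ) ⟪J y, y⟫ = ⟪J y, y⟫ := by
    rw [inner_conj_symm, ← symm_inner J hJ]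
  exact Complex.conj_eq_iff_im.mp h

lemma expand (J : F →L[ℂ] F) (hJ : IsSelfAdjoint J) (a b : F) (c : ℂ) :
    (⟪J (a + c • b), a + c • b⟫).re
      = (⟪J a, a⟫).re + 2 * (c * ⟪J a, b⟫).re + ‖c‖^2 * (⟪J b, b⟫).re := by
  have hba : ⟪J b, a⟫ = (starRingEnd ℂ) ⟪J a, b⟫ := by
    rw [symm_inner J hJ, inner_conj_symm]
  simp only [map_add, map_smul, inner_add_left, inner_add_right, inner_smul_left,
    inner_smul_right, hba, Complex.add_re, Complex.mul_re, Complex.conj_re, Complex.conj_im,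
    Complex.sq_norm, Complex.normSq_apply, Complex.add_im, Complex.mul_im]
  ring

lemma phase (cq cp : ℂ) (s : ℝ) :
    ∃ u : ℂ, ‖u‖ = 1 ∧ (u * cq).re = 0 ∧ (u * cp).re * s ≤ 0 := by
  obtain ⟨u₀, hu₀, hcq⟩ : ∃ u₀ : ℂ, ‖u₀‖ = 1 ∧ (u₀ * cq).re = 0 := by
    by_cases hcq : cq = 0
    · exact ⟨1, by simp, by simp [hcq]⟩
    · refine ⟨Complex.I * (starRingEnd ℂ) cq / (‖cq‖ : ℂ), ?_, ?_⟩
      · have hn : ‖cq‖ ≠ 0 := norm_ne_zero_iff.mpr hcq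
        rw [norm_div, norm_mul]
        simp only [RCLike.norm_conj, Complex.norm_I, one_mul, Complex.norm_real,
          Real.norm_eq_abs, abs_norm]
        exact div_self hn
      · have h : Complex.I * (starRingEnd ℂ) cq / (‖cq‖ : ℂ) * cq
            = Complex.I * ((‖cq‖ : ℝ) : ℂ) := by
          rw [div_mul_eq_mul_div, mul_assoc, mul_comm ((starRingEnd ℂ) cq) cq,
            Complex.mul_conj, Complex.normSq_eq_norm_sq, Complex.ofReal_pow]
          rw [mul_div_assoc]
          congr 1
          have hn : ((‖cq‖:ℝ):ℂ) ≠ 0 :=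
            Complex.ofReal_ne_zero.mpr (norm_ne_zero_iff.mpr hcq)
          rw [sq, mul_comm]
          field_simp
        rw [h]
        simp
  by_cases hs : (u₀ * cp).re * s ≤ 0
  · exact ⟨u₀, hu₀, hcq, hs⟩
  · refine ⟨-u₀, by simpa using hu₀, by rw [neg_mul, Complex.neg_re, hcq, neg_zero], ?_⟩
    have : (-u₀ * cp).re = -((u₀ * cp).re) := by
      rw [neg_mul, Complex.neg_re]
    rw [this]
    nlinarith [lt_of_not_ge hs]

end Helpers

lemma key (JK : K →L[ℂ] K) (hJKsa : IsSelfAdjoint JK)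
    (JE : E →L[ℂ] E) (hJEsa : IsSelfAdjoint JE)
    (T : H →L[ℂ] K) (V : H →L[ℂ] E)
    (h1 : ∀ x : H, ⟪JE (V x), V x⟫ = 0 → 0 ≤ (⟪JK (T x), T x⟫).re)
    (x y : H) (hx : 0 < (⟪JE (V x), V x⟫).re) (hy : (⟪JE (V y), V y⟫).re < 0) :
    0 ≤ (⟪JK (T y), T y⟫).re * (⟪JE (V x), V x⟫).re
      - (⟪JK (T x), T x⟫).re * (⟪JE (V y), V y⟫).re := by
  set qx := (⟪JK (T x), T x⟫).re with hqx
  set qy := (⟪JK (T y), T y⟫).re with hqy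
  set px := (⟪JE (V x), V x⟫).re with hpx
  set py := (⟪JE (V y), V y⟫).re with hpy
  obtain ⟨u, hu1, hucq, hucp⟩ := phase ⟪JK (T x), T y⟫ ⟪JE (V x), V y⟫ qy
  set r := (u * ⟪JE (V x), V y⟫).re with hr
  set f : ℝ → ℝ := fun β => px + 2 * (β * r) + β ^ 2 * py with hf
  set B : ℝ := max 1 ((px + 2 * |r| + 1) / (-py)) with hB
  have hB1 : 1 ≤ B := le_max_left _ _
  have hB2 : px + 2 * |r| + 1 ≤ B * (-py) := by
    rw [← div_le_iff₀ (by linarith : (0:ℝ) < -py)]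
    exact le_max_right _ _
  have hfB : f B < 0 := by
    have h1 : 2 * (B * r) ≤ 2 * (B * |r|) := by
      have := le_abs_self r
      nlinarith
    have h2 : B * px + 2 * (B * |r|) + B ≤ -(B ^ 2 * py) := by nlinarith
    show px + 2 * (B * r) + B ^ 2 * py < 0
    nlinarith
  have hcont : Continuous f := by fun_prop
  obtain ⟨β₀, hβ₀mem, hfβ₀⟩ : ∃ β₀ ∈ Set.Icc (0:ℝ) B, f β₀ = 0 := by
    have := intermediate_value_Icc' (by linarith : (0:ℝ) ≤ B) hcont.continuousOn
    have h0 : (0:ℝ) ∈ Set.Icc (f B) (f 0) := by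
      constructor
      · linarith
      · show (0:ℝ) ≤ px + 2 * (0 * r) + 0 ^ 2 * py
        simp; linarith
    obtain ⟨β₀, hm, he⟩ := this h0
    exact ⟨β₀, hm, he⟩
  have hβ₀ : 0 ≤ β₀ := hβ₀mem.1
  set c : ℂ := (β₀ : ℂ) * u with hc
  have hcre : ∀ w : ℂ, (c * w).re = β₀ * (u * w).re := by
    intro w
    rw [hc, mul_assoc]
    simp [Complex.mul_re, Complex.ofReal_re, Complex.ofReal_im]
  have hcn : ‖c‖ ^ 2 = β₀ ^ 2 := by
    rw [hc, norm_mul, hu1, mul_one, Complex.norm_real, Real.norm_eq_abs, sq_abs]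
  set z := x + c • y with hz
  have hpz : (⟪JE (V z), V z⟫).re = 0 := by
    have he := expand JE hJEsa (V x) (V y) c
    rw [hz, map_add, map_smul, he, hcre, hcn]
    have hfb : px + 2 * (β₀ * r) + β₀ ^ 2 * py = 0 := hfβ₀
    linarith
  have hqz : (⟪JK (T z), T z⟫).re = qx + β₀ ^ 2 * qy := by
    have he := expand JK hJKsa (T x) (T y) c
    rw [hz, map_add, map_smul, he, hcre, hcn, hucq]
    ring
  have hq0 : 0 ≤ qx + β₀ ^ 2 * qy := by
    rw [← hqz]
    apply h1
    exact Complex.ext hpz (im_zero JE hJEsa (V z))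
  have hsub : β₀ ^ 2 * py = -(px + 2 * (β₀ * r)) := by
    have hfb : px + 2 * (β₀ * r) + β₀ ^ 2 * py = 0 := hfβ₀
    linarith
  have h2 : 0 ≤ (qx + β₀ ^ 2 * qy) * (-py) := mul_nonneg hq0 (by linarith)
  have h3 : β₀ ^ 2 * py * qy = -(px + 2 * (β₀ * r)) * qy := by rw [hsub]
  have h4 : 0 ≤ β₀ * -(r * qy) := mul_nonneg hβ₀ (by linarith)
  nlinarith [h2, h3, h4]

lemma smOp_inner (JK : K →L[ℂ] K) (JE : E →L[ℂ] E) (T : H →L[ℂ] K) (V : H →L[ℂ] E)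
    (ρ : ℝ) (x : H) :
    ⟪smOp JK JE T V ρ x, x⟫ = ⟪JK (T x), T x⟫ + (ρ : ℂ) * ⟪JE (V x), V x⟫ := by
  simp only [smOp, ContinuousLinearMap.add_apply, ContinuousLinearMap.coe_smul',
    Pi.smul_apply, ContinuousLinearMap.comp_apply, inner_add_left, inner_smul_left,
    ContinuousLinearMap.adjoint_inner_left, Complex.conj_ofReal]

theorem stmt0
    (JK : K →L[ℂ] K) (hJKsa : IsSelfAdjoint JK) (hJK2 : JK ∘L JK = 1)
    (JE : E →L[ℂ] E) (hJEsa : IsSelfAdjoint JE) (hJE2 : JE ∘L JE = 1)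
    (T : H →L[ℂ] K) (V : H →L[ℂ] E)
    (hT : Function.Surjective T) (hV : Function.Surjective V)
    (hplus : ∃ xp : H, 0 < (⟪JE (V xp), V xp⟫).re)
    (hminus : ∃ xm : H, (⟪JE (V xm), V xm⟫).re < 0) :
    (∀ x : H, ⟪JE (V x), V x⟫ = 0 → 0 ≤ (⟪JK (T x), T x⟫).re) ↔
      ∃ ρ : ℝ, IsPosSemidef (smOp JK JE T V ρ) := by
  constructor
  · intro h1
    obtain ⟨xp, hxp⟩ := hplus
    obtain ⟨xm, hxm⟩ := hminus
    set q : H → ℝ := fun x => (⟪JK (T x), T x⟫).re with hq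
    set p : H → ℝ := fun x => (⟪JE (V x), V x⟫).re with hp
    set S : Set ℝ := {t | ∃ x : H, 0 < p x ∧ t = -q x / p x} with hS
    have hSne : S.Nonempty := ⟨_, xp, hxp, rfl⟩
    have hub : ∀ y : H, p y < 0 → ∀ t ∈ S, t ≤ -q y / p y := by
      rintro y hy t ⟨x, hx, rfl⟩
      have hkey := key JK hJKsa JE hJEsa T V h1 x y hx hy
      have hpy' : (0:ℝ) < -p y := by linarith
      rw [show -q y / p y = q y / (-p y) by rw [neg_div, div_neg],
        show -q x / p x = (-q x) / p x from rfl, div_le_div_iff₀ hx hpy']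
      nlinarith
    have hbdd : BddAbove S := ⟨-q xm / p xm, fun t ht => hub xm hxm t ht⟩
    refine ⟨sSup S, fun x => ?_⟩
    rw [smOp_inner]
    constructor
    · simp [Complex.add_im, Complex.mul_im, im_zero JK hJKsa, im_zero JE hJEsa]
    · have hre : (⟪JK (T x), T x⟫ + ((sSup S : ℝ) : ℂ) * ⟪JE (V x), V x⟫).re
          = q x + sSup S * p x := by
        simp [Complex.add_re, Complex.mul_re, im_zero JE hJEsa]
        rfl
      rw [hre]
      rcases lt_trichotomy (p x) 0 with hpx | hpx | hpx
      · have hle : sSup S ≤ -q x / p x := csSup_le hSne (fun t ht => hub x hpx t ht)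
        have := mul_le_mul_of_nonpos_right hle (le_of_lt hpx)
        rw [div_mul_cancel₀ _ (ne_of_lt hpx)] at this
        linarith
      · have h0 : ⟪JE (V x), V x⟫ = 0 :=
          Complex.ext hpx (im_zero JE hJEsa (V x))
        have := h1 x h0
        rw [hpx]
        simpa using this
      · have hle : -q x / p x ≤ sSup S := le_csSup hbdd ⟨x, hpx, rfl⟩
        have h := (div_le_iff₀ hpx).mp hle
        nlinarith
  · rintro ⟨ρ, hρ⟩ x hx
    have := (hρ x).2
    rw [smOp_inner, hx] at this
    simpa using this
end
end

section
/- Let ρ ∈ ℝ, ρ ≠ 0, and z₀ ∈ E. The function F_ρ(x) = [Tx,Tx]_K + ρ·[Vx−z₀,Vx−z₀]_E attains a global minimum on H if and only if T^#T + ρ·V^#V is positive semidefinite on H and V^#z₀ lies in the range of T^#T + ρ·V^#V. -/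
open scoped ComplexInnerProductSpace Pointwise

noncomputable section

variable {H K E : Type*}
  [NormedAddCommGroup H] [InnerProductSpace ℂ H] [CompleteSpace H]
  [NormedAddCommGroup K] [InnerProductSpace ℂ K] [CompleteSpace K]
  [NormedAddCommGroup E] [InnerProductSpace ℂ E] [CompleteSpace E]

set_option linter.unusedSectionVars false in
private lemma quad_aux (a c : ℝ) (h : ∀ t : ℝ, 0 ≤ t^2*a + 2*t*c) : c = 0 ∧ 0 ≤ a := by
  have key : c = 0 := by
    by_contra hc
    set s : ℝ := 1/(|a|+1) with hsdef
    have hpos : (0:ℝ) < |a| + 1 := by positivity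
    have hspos : 0 < s := by positivity
    have hs : s * (|a|+1) = 1 := one_div_mul_cancel (ne_of_gt hpos)
    have h3 := h (-(c*s))
    have hle := le_abs_self a
    have hc2 : 0 < c^2 := by positivity
    have hkey : (-(c*s))^2*a + 2*(-(c*s))*c = c^2*s^2*a - 2*c^2*s := by ring
    rw [hkey] at h3
    nlinarith [mul_le_mul_of_nonneg_left hle (by positivity : (0:ℝ) ≤ c^2*s^2),
      mul_pos hc2 hspos, mul_pos (mul_pos hc2 hspos) hspos]
  exact ⟨key, by nlinarith [h 1, h (-1), key]⟩

set_option linter.unusedSectionVars false in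
private lemma expand_step (A : H →L[ℂ] H) (hsym : ∀ x y : H, ⟪A x, y⟫ = ⟪x, A y⟫) (b : H)
    (xt : H) (t : ℝ) (w : H) :
    (⟪A (xt + (t:ℂ)•w), xt + (t:ℂ)•w⟫).re - 2*(⟪b, xt + (t:ℂ)•w⟫).re =
      ((⟪A xt, xt⟫).re - 2*(⟪b, xt⟫).re) + t^2*(⟪A w, w⟫).re
        + 2*t*(⟪A xt - b, w⟫).re := by
  have hc : ⟪A w, xt⟫ = (starRingEnd ℂ) ⟪A xt, w⟫ := by
    rw [hsym w xt, inner_conj_symm]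
  simp only [map_add, map_smul, inner_add_left, inner_add_right, inner_smul_left,
    inner_smul_right, inner_sub_left, Complex.add_re, Complex.sub_re, Complex.mul_re,
    Complex.conj_re, Complex.conj_im, Complex.ofReal_re, Complex.ofReal_im, hc,
    Complex.conj_conj]
  ring

set_option linter.unusedSectionVars false in
private lemma quad_min (A : H →L[ℂ] H) (hsym : ∀ x y : H, ⟪A x, y⟫ = ⟪x, A y⟫) (b : H) :
    (∃ xt : H, ∀ x : H,
        (⟪A xt, xt⟫).re - 2*(⟪b, xt⟫).re ≤ (⟪A x, x⟫).re - 2*(⟪b, x⟫).re) ↔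
      ((∀ x : H, (⟪A x, x⟫).im = 0 ∧ 0 ≤ (⟪A x, x⟫).re) ∧ ∃ x : H, A x = b) := by
  have him : ∀ x : H, (⟪A x, x⟫).im = 0 := by
    intro x
    have h1 : ⟪A x, x⟫ = (starRingEnd ℂ) ⟪A x, x⟫ := by
      conv_lhs => rw [hsym x x, ← inner_conj_symm]
    exact Complex.conj_eq_iff_im.mp h1.symm
  constructor
  · rintro ⟨xt, hmin⟩
    have key : ∀ w : H, (⟪A xt - b, w⟫).re = 0 ∧ 0 ≤ (⟪A w, w⟫).re := by
      intro w
      apply quad_aux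
      intro t
      have := hmin (xt + (t:ℂ)•w)
      rw [expand_step A hsym b xt t w] at this
      linarith
    have hker : A xt = b := by
      have h0 : ⟪A xt - b, A xt - b⟫ = 0 := by
        have hre := (key (A xt - b)).1
        have him2 : (⟪A xt - b, A xt - b⟫ : ℂ).im = 0 :=
          Complex.conj_eq_iff_im.mp (inner_conj_symm _ _)
        exact Complex.ext hre him2
      exact sub_eq_zero.mp (inner_self_eq_zero.mp h0)
    exact ⟨fun x => ⟨him x, (key x).2⟩, xt, hker⟩
  · rintro ⟨hpos, x₀, hx₀⟩
    refine ⟨x₀, fun x => ?_⟩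
    have h := expand_step A hsym b x₀ 1 (x - x₀)
    rw [hx₀, sub_self, inner_zero_left] at h
    have hx : x₀ + ((1:ℝ):ℂ) • (x - x₀) = x := by simp
    rw [hx] at h
    have h2 := (hpos (x - x₀)).2
    have e : (⟪A x₀, x₀⟫).re = (⟪b, x₀⟫).re := by rw [hx₀]
    have e2 : A (x - x₀) = A x - A x₀ := map_sub A x x₀
    rw [e2] at h2
    simp [hx₀] at h h2
    linarith

theorem stmt2
    (JK : K →L[ℂ] K) (hJKsa : IsSelfAdjoint JK) (hJK2 : JK ∘L JK = 1)
    (JE : E →L[ℂ] E) (hJEsa : IsSelfAdjoint JE) (hJE2 : JE ∘L JE = 1)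
    (T : H →L[ℂ] K) (V : H →L[ℂ] E)
    (hT : Function.Surjective T) (hV : Function.Surjective V)
    (ρ : ℝ) (hρ : ρ ≠ 0) (z₀ : E) :
    (smSet JK JE T V ρ z₀).Nonempty ↔
      (IsPosSemidef (smOp JK JE T V ρ) ∧
        ∃ x : H, smOp JK JE T V ρ x = (ContinuousLinearMap.adjoint V) (JE z₀)) := by
  set A := smOp JK JE T V ρ with hA
  set b := (ρ:ℂ) • (ContinuousLinearMap.adjoint V) (JE z₀) with hb
  have hJK : ContinuousLinearMap.adjoint JK = JK := hJKsa.adjoint_eq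
  have hJE : ContinuousLinearMap.adjoint JE = JE := hJEsa.adjoint_eq
  have hsym : ∀ x y : H, ⟪A x, y⟫ = ⟪x, A y⟫ := by
    intro x y
    simp only [hA, smOp, ContinuousLinearMap.add_apply, ContinuousLinearMap.comp_apply,
      ContinuousLinearMap.smul_apply, inner_add_left, inner_add_right,
      inner_smul_left, inner_smul_right,
      ContinuousLinearMap.adjoint_inner_left, ContinuousLinearMap.adjoint_inner_right,
      Complex.conj_ofReal]
    rw [← hJK, ← hJE, ContinuousLinearMap.adjoint_inner_left,
      ContinuousLinearMap.adjoint_inner_left, hJK, hJE]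
  have hexp : ∀ x : H,
      (⟪JK (T x), T x⟫).re + ρ * (⟪JE (V x - z₀), V x - z₀⟫).re =
        (⟪A x, x⟫).re - 2*(⟪b, x⟫).re + ρ*(⟪JE z₀, z₀⟫).re := by
    intro x
    have hc : ⟪JE (V x), z₀⟫ = (starRingEnd ℂ) ⟪JE z₀, V x⟫ := by
      conv_lhs => rw [← hJE]
      rw [ContinuousLinearMap.adjoint_inner_left, ← inner_conj_symm]
    simp only [hA, hb, smOp, map_sub, inner_sub_left, inner_sub_right,
      ContinuousLinearMap.add_apply, ContinuousLinearMap.comp_apply,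
      ContinuousLinearMap.smul_apply, inner_add_left, inner_smul_left,
      ContinuousLinearMap.adjoint_inner_left, Complex.conj_ofReal,
      Complex.add_re, Complex.sub_re, Complex.mul_re, Complex.ofReal_re,
      Complex.ofReal_im, Complex.conj_re, Complex.conj_im, hc]
    ring
  have hρ' : (ρ:ℂ) ≠ 0 := by exact_mod_cast hρ
  constructor
  · rintro ⟨xt, hxt⟩
    have hmin : ∀ x : H,
        (⟪A xt, xt⟫).re - 2*(⟪b, xt⟫).re ≤ (⟪A x, x⟫).re - 2*(⟪b, x⟫).re := by
      intro x
      have := hxt x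
      rw [hexp xt, hexp x] at this
      linarith
    obtain ⟨hpos, x, hx⟩ := (quad_min A hsym b).mp ⟨xt, hmin⟩
    refine ⟨hpos, (ρ:ℂ)⁻¹ • x, ?_⟩
    rw [map_smul, hx, hb, smul_smul, inv_mul_cancel₀ hρ', one_smul]
  · rintro ⟨hpos, x, hx⟩
    have hAx : A ((ρ:ℂ) • x) = b := by rw [map_smul, hx, hb]
    obtain ⟨xt, hxt⟩ := (quad_min A hsym b).mpr ⟨hpos, _, hAx⟩
    refine ⟨xt, fun x' => ?_⟩
    have := hxt x'
    rw [hexp xt, hexp x']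
    linarith
end
end

section
/- Let ρ ∈ ℝ, ρ ≠ 0, and z₀ ∈ E, and assume that the function F_ρ(x) = [Tx,Tx]_K + ρ·[Vx−z₀,Vx−z₀]_E attains a global minimum on H. Then x̃ ∈ H is a global minimizer of F_ρ if and only if (T^#T + ρ·V^#V)x̃ = ρ·V^#z₀. Moreover, if x̃ is a global minimizer, then the set of global minimizers of F_ρ equals the affine set x̃ + ker(T^#T + ρ·V^#V). -/
open scoped ComplexInnerProductSpace Pointwise

noncomputable section

variable {H K E : Type*}
  [NormedAddCommGroup H] [InnerProductSpace ℂ H] [CompleteSpace H]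
  [NormedAddCommGroup K] [InnerProductSpace ℂ K] [CompleteSpace K]
  [NormedAddCommGroup E] [InnerProductSpace ℂ E] [CompleteSpace E]

private lemma sa_inner' {F : Type*} [NormedAddCommGroup F] [InnerProductSpace ℂ F]
    [CompleteSpace F]
    (J : F →L[ℂ] F) (hJ : IsSelfAdjoint J) (a b : F) : ⟪J a, b⟫ = ⟪a, J b⟫ := by
  rw [← hJ.adjoint_eq, ContinuousLinearMap.adjoint_inner_left, hJ.adjoint_eq]

private lemma re_symm' {F : Type*} [NormedAddCommGroup F] [InnerProductSpace ℂ F]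
    (a b : F) : (⟪a, b⟫).re = (⟪b, a⟫).re := by
  rw [← inner_conj_symm b a, Complex.conj_re]

private lemma quadJ' {F : Type*} [NormedAddCommGroup F] [InnerProductSpace ℂ F]
    [CompleteSpace F]
    (J : F →L[ℂ] F) (hJ : IsSelfAdjoint J) (a b : F) :
    (⟪J (a + b), a + b⟫).re = (⟪J a, a⟫).re + (⟪J b, b⟫).re + 2 * (⟪J a, b⟫).re := by
  have h1 : (⟪J b, a⟫).re = (⟪J a, b⟫).re := by
    rw [sa_inner' J hJ b a, re_symm']
  simp only [map_add, inner_add_left, inner_add_right, Complex.add_re, h1]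
  ring

private lemma expand'
    (JK : K →L[ℂ] K) (hJKsa : IsSelfAdjoint JK)
    (JE : E →L[ℂ] E) (hJEsa : IsSelfAdjoint JE)
    (T : H →L[ℂ] K) (V : H →L[ℂ] E) (ρ : ℝ) (z₀ : E) (xt h : H) :
    (⟪JK (T (xt + h)), T (xt + h)⟫).re + ρ * (⟪JE (V (xt + h) - z₀), V (xt + h) - z₀⟫).re =
    ((⟪JK (T xt), T xt⟫).re + ρ * (⟪JE (V xt - z₀), V xt - z₀⟫).re)
    + (⟪smOp JK JE T V ρ h, h⟫).re
    + 2 * (⟪smOp JK JE T V ρ xt - (ρ : ℂ) • (ContinuousLinearMap.adjoint V) (JE z₀), h⟫).re := by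
  have hT1 : T (xt + h) = T xt + T h := map_add _ _ _
  have hV1 : V (xt + h) - z₀ = (V xt - z₀) + V h := by rw [map_add]; abel
  have eA : (⟪smOp JK JE T V ρ h, h⟫).re
      = (⟪JK (T h), T h⟫).re + ρ * (⟪JE (V h), V h⟫).re := by
    simp only [smOp, ContinuousLinearMap.add_apply, ContinuousLinearMap.smul_apply,
      ContinuousLinearMap.comp_apply, inner_add_left, inner_smul_left,
      ContinuousLinearMap.adjoint_inner_left, Complex.add_re, Complex.conj_ofReal,
      Complex.re_ofReal_mul]
  have eL : (⟪smOp JK JE T V ρ xt - (ρ : ℂ) • (ContinuousLinearMap.adjoint V) (JE z₀), h⟫).re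
      = (⟪JK (T xt), T h⟫).re + ρ * (⟪JE (V xt - z₀), V h⟫).re := by
    simp only [smOp, ContinuousLinearMap.add_apply, ContinuousLinearMap.smul_apply,
      ContinuousLinearMap.comp_apply, inner_sub_left, inner_add_left, inner_smul_left,
      ContinuousLinearMap.adjoint_inner_left, Complex.sub_re, Complex.add_re,
      Complex.conj_ofReal, Complex.re_ofReal_mul, map_sub]
    ring
  rw [hT1, hV1, quadJ' JK hJKsa, quadJ' JE hJEsa, eA, eL]
  ring

private lemma quad_trick' (q g : ℝ) (h : ∀ t : ℝ, 0 ≤ t^2*q + 2*t*g) : g = 0 ∧ 0 ≤ q := by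
  have hg : g = 0 := by
    by_contra hg
    rcases le_or_gt q 0 with hq | hq
    · have h1 := h (-g)
      nlinarith [sq_pos_of_ne_zero hg, mul_nonpos_of_nonneg_of_nonpos (sq_nonneg g) hq]
    · have h1 := h (-(g/q))
      have h2 : 0 ≤ ((-(g/q))^2*q + 2*(-(g/q))*g) * q := mul_nonneg h1 hq.le
      have hq' : q ≠ 0 := hq.ne'
      field_simp at h2
      nlinarith [sq_pos_of_ne_zero hg, mul_pos (sq_pos_of_ne_zero hg) (mul_pos (mul_pos hq hq) hq)]
  refine ⟨hg, ?_⟩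
  have h1 := h 1; rw [hg] at h1; linarith

private lemma inner_re_self_zero {F : Type*} [NormedAddCommGroup F] [InnerProductSpace ℂ F]
    (u : F) (h : (⟪u, u⟫).re = 0) : u = 0 := by
  rw [inner_self_eq_norm_sq_to_K (𝕜 := ℂ)] at h
  simp [← Complex.ofReal_pow] at h
  simpa using h

theorem stmt3
    (JK : K →L[ℂ] K) (hJKsa : IsSelfAdjoint JK) (hJK2 : JK ∘L JK = 1)
    (JE : E →L[ℂ] E) (hJEsa : IsSelfAdjoint JE) (hJE2 : JE ∘L JE = 1)
    (T : H →L[ℂ] K) (V : H →L[ℂ] E)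
    (hT : Function.Surjective T) (hV : Function.Surjective V)
    (ρ : ℝ) (hρ : ρ ≠ 0) (z₀ : E)
    (hmin : (smSet JK JE T V ρ z₀).Nonempty) :
    (∀ xt : H, xt ∈ smSet JK JE T V ρ z₀ ↔
        smOp JK JE T V ρ xt = (ρ : ℂ) • (ContinuousLinearMap.adjoint V) (JE z₀)) ∧
    (∀ xt ∈ smSet JK JE T V ρ z₀,
      smSet JK JE T V ρ z₀ =
        (fun n => xt + n) '' ((LinearMap.ker (smOp JK JE T V ρ : H →ₗ[ℂ] H) : Set H))) := by
  classical
  have key : ∀ xt ∈ smSet JK JE T V ρ z₀, ∀ v : H,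
      (⟪smOp JK JE T V ρ xt - (ρ : ℂ) • (ContinuousLinearMap.adjoint V) (JE z₀), v⟫).re = 0 ∧
      0 ≤ (⟪smOp JK JE T V ρ v, v⟫).re := by
    intro xt hxt v
    refine quad_trick' _ _ ?_
    intro t
    have h1 := hxt (xt + (t : ℂ) • v)
    have h2 := expand' JK hJKsa JE hJEsa T V ρ z₀ xt ((t : ℂ) • v)
    have hq : (⟪smOp JK JE T V ρ ((t : ℂ) • v), (t : ℂ) • v⟫).re
        = t ^ 2 * (⟪smOp JK JE T V ρ v, v⟫).re := by
      rw [map_smul, inner_smul_left, inner_smul_right, Complex.conj_ofReal,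
        ← mul_assoc, ← Complex.ofReal_mul, Complex.re_ofReal_mul]
      ring
    have hg : (⟪smOp JK JE T V ρ xt - (ρ : ℂ) • (ContinuousLinearMap.adjoint V) (JE z₀),
        (t : ℂ) • v⟫).re
        = t * (⟪smOp JK JE T V ρ xt -
            (ρ : ℂ) • (ContinuousLinearMap.adjoint V) (JE z₀), v⟫).re := by
      rw [inner_smul_right, Complex.re_ofReal_mul]
    rw [h2, hq, hg] at h1
    nlinarith [h1]
  have iff1 : ∀ xt : H, xt ∈ smSet JK JE T V ρ z₀ ↔
      smOp JK JE T V ρ xt = (ρ : ℂ) • (ContinuousLinearMap.adjoint V) (JE z₀) := by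
    intro xt
    constructor
    · intro hxt
      have h0 := (key xt hxt
        (smOp JK JE T V ρ xt - (ρ : ℂ) • (ContinuousLinearMap.adjoint V) (JE z₀))).1
      have hz := inner_re_self_zero _ h0
      exact sub_eq_zero.mp hz
    · intro heq
      intro x
      obtain ⟨y, hy⟩ := hmin
      have hqnn := (key y hy (x - xt)).2
      have h2 := expand' JK hJKsa JE hJEsa T V ρ z₀ xt (x - xt)
      have hx : xt + (x - xt) = x := by abel
      rw [hx] at h2
      have hz : (⟪smOp JK JE T V ρ xt -
          (ρ : ℂ) • (ContinuousLinearMap.adjoint V) (JE z₀), x - xt⟫).re = 0 := by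
        rw [heq, sub_self, inner_zero_left, Complex.zero_re]
      rw [h2, hz]
      linarith
  refine ⟨iff1, ?_⟩
  intro xt hxt
  ext x
  simp only [Set.mem_image, SetLike.mem_coe, LinearMap.mem_ker]
  constructor
  · intro hx
    refine ⟨x - xt, ?_, by abel⟩
    have h1 := (iff1 x).1 hx
    have h2 := (iff1 xt).1 hxt
    show smOp JK JE T V ρ (x - xt) = 0
    rw [map_sub, h1, h2, sub_self]
  · rintro ⟨n, hn, rfl⟩
    apply (iff1 _).2
    have hn' : smOp JK JE T V ρ n = 0 := hn
    rw [map_add, (iff1 xt).1 hxt, hn', add_zero]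
end
end

section
/- Let H, K, E be complex Hilbert spaces and let T : H → K and V : H → E be bounded surjective linear operators. Define L : H → K×E by Lx = (Tx,Vx). Then the following are equivalent: (1) the range of L is a closed subspace of the product Hilbert space K×E; (2) T(ker V) is a closed subspace of K; (3) ker T + ker V is a closed subspace of H. -/
open scoped ComplexInnerProductSpace Pointwise

noncomputable section

variable {H K E : Type*}
  [NormedAddCommGroup H] [InnerProductSpace ℂ H] [CompleteSpace H]
  [NormedAddCommGroup K] [InnerProductSpace ℂ K] [CompleteSpace K]
  [NormedAddCommGroup E] [InnerProductSpace ℂ E] [CompleteSpace E]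

/-- A surjective bounded operator between Hilbert spaces has a bounded right inverse. -/
lemma exists_right_inverse_aux (S : H →L[ℂ] E) (hS : Function.Surjective S) :
    ∃ R : E →L[ℂ] H, ∀ e, S (R e) = e := by
  set N : Submodule ℂ H := LinearMap.ker (S : H →ₗ[ℂ] E) with hNdef
  have hNclosed : IsClosed (N : Set H) := ContinuousLinearMap.isClosed_ker S
  haveI : CompleteSpace N := hNclosed.completeSpace_coe
  haveI : CompleteSpace Nᗮ := N.isClosed_orthogonal.completeSpace_coe
  set f : Nᗮ →L[ℂ] E := S.comp Nᗮ.subtypeL with hfdef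
  have hinj : LinearMap.ker (f : Nᗮ →ₗ[ℂ] E) = ⊥ := by
    rw [Submodule.eq_bot_iff]
    rintro ⟨x, hx⟩ hker
    have hxN : x ∈ N := by
      simpa [hfdef, hNdef] using hker
    have : ⟪x, x⟫ = 0 := (Submodule.mem_orthogonal N x).mp hx x hxN
    have hx0 : x = 0 := inner_self_eq_zero.mp this
    exact Subtype.ext hx0
  have hsurj : LinearMap.range (f : Nᗮ →ₗ[ℂ] E) = ⊤ := by
    rw [LinearMap.range_eq_top]
    intro e
    obtain ⟨x, hx⟩ := hS e
    refine ⟨⟨x - (Submodule.orthogonalProjectionOnto N x : H),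
      Submodule.sub_starProjection_mem_orthogonal (K := N) x⟩, ?_⟩
    have hmem : ((Submodule.orthogonalProjectionOnto N x : H)) ∈ N := (Submodule.orthogonalProjectionOnto N x).2
    have : S ((Submodule.orthogonalProjectionOnto N x : H)) = 0 := hmem
    simp [hfdef, map_sub, hx]
    exact this
  set eqv := ContinuousLinearEquiv.ofBijective f hinj hsurj with heqv
  refine ⟨Nᗮ.subtypeL.comp (eqv.symm : E →L[ℂ] Nᗮ), fun e => ?_⟩
  have : f (eqv.symm e) = e := by
    have := eqv.apply_symm_apply e
    simpa [heqv] using this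
  simpa [hfdef] using this

theorem stmt5
    (T : H →L[ℂ] K) (V : H →L[ℂ] E)
    (hT : Function.Surjective T) (hV : Function.Surjective V) :
    (IsClosed (Set.range (fun x : H => (T x, V x))) ↔
        IsClosed (T '' (LinearMap.ker (V : H →ₗ[ℂ] E) : Set H))) ∧
    (IsClosed (T '' (LinearMap.ker (V : H →ₗ[ℂ] E) : Set H)) ↔
        IsClosed ((LinearMap.ker (T : H →ₗ[ℂ] K) : Set H) + (LinearMap.ker (V : H →ₗ[ℂ] E) : Set H))) := by
  obtain ⟨RT, hRT⟩ := exists_right_inverse_aux T hT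
  obtain ⟨RV, hRV⟩ := exists_right_inverse_aux V hV
  constructor
  · constructor
    · intro h
      have key : T '' (LinearMap.ker (V : H →ₗ[ℂ] E) : Set H)
          = (fun k : K => (k, (0 : E))) ⁻¹' (Set.range fun x : H => (T x, V x)) := by
        ext k
        simp only [Set.mem_image, Set.mem_preimage, Set.mem_range, SetLike.mem_coe,
          LinearMap.mem_ker, Prod.mk.injEq]
        constructor
        · rintro ⟨x, hx, rfl⟩
          exact ⟨x, rfl, hx⟩
        · rintro ⟨x, rfl, hx⟩
          exact ⟨x, hx, rfl⟩
      rw [key]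
      exact h.preimage (by fun_prop)
    · intro h
      have key : (Set.range fun x : H => (T x, V x))
          = (fun p : K × E => p.1 - T (RV p.2)) ⁻¹' (T '' (LinearMap.ker (V : H →ₗ[ℂ] E) : Set H)) := by
        ext ⟨k, e⟩
        simp only [Set.mem_range, Set.mem_preimage, Set.mem_image, SetLike.mem_coe,
          LinearMap.mem_ker, Prod.mk.injEq, ContinuousLinearMap.coe_coe]
        constructor
        · rintro ⟨x, rfl, rfl⟩
          exact ⟨x - RV (V x), by simp [map_sub, hRV], by simp [map_sub]⟩
        · rintro ⟨n, hn, hTn⟩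
          refine ⟨n + RV e, ?_, ?_⟩
          · rw [map_add, hTn]; abel
          · simp [map_add, hn, hRV]
      rw [key]
      exact h.preimage (by fun_prop)
  · constructor
    · intro h
      have key : (LinearMap.ker (T : H →ₗ[ℂ] K) : Set H) + (LinearMap.ker (V : H →ₗ[ℂ] E) : Set H)
          = T ⁻¹' (T '' (LinearMap.ker (V : H →ₗ[ℂ] E) : Set H)) := by
        ext x
        simp only [Set.mem_preimage, Set.mem_image, SetLike.mem_coe, LinearMap.mem_ker,
          Set.mem_add, ContinuousLinearMap.coe_coe]
        constructor
        · rintro ⟨m, hm, n, hn, rfl⟩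
          exact ⟨n, hn, by simp [map_add, hm]⟩
        · rintro ⟨n, hn, hTn⟩
          exact ⟨x - n, by simp [map_sub, hTn], n, hn, by abel⟩
      rw [key]
      exact h.preimage T.continuous
    · intro h
      have key : T '' (LinearMap.ker (V : H →ₗ[ℂ] E) : Set H)
          = RT ⁻¹' ((LinearMap.ker (T : H →ₗ[ℂ] K) : Set H) + (LinearMap.ker (V : H →ₗ[ℂ] E) : Set H)) := by
        ext k
        simp only [Set.mem_preimage, Set.mem_image, SetLike.mem_coe, LinearMap.mem_ker,
          Set.mem_add, ContinuousLinearMap.coe_coe]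
        constructor
        · rintro ⟨n, hn, rfl⟩
          exact ⟨RT (T n) - n, by simp [map_sub, hRT], n, hn, by abel⟩
        · rintro ⟨m, hm, n, hn, hmn⟩
          refine ⟨n, hn, ?_⟩
          have := congrArg T hmn
          rw [map_add, hm, zero_add, hRT] at this
          exact this
      rw [key]
      exact h.preimage RT.continuous
end
end

section
/- Let ρ ∈ ℝ, ρ ≠ 0. Assume T^#T + ρ·V^#V is positive semidefinite on H and that ker T + ker V is a closed subspace of H. Then the following are equivalent: (1) for every z₀ ∈ E with [z₀, Vx]_E = 0 for all x ∈ ker(T^#T + ρ·V^#V), the function F_ρ(x) = [Tx,Tx]_K + ρ·[Vx−z₀,Vx−z₀]_E attains a global minimum on H; (2) R(L) + R(L)^[⊥] is a closed subspace of K×E (i.e. R(L) is pseudo-regular); (3) the range of T^#T + ρ·V^#V is closed in H. -/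
open scoped ComplexInnerProductSpace Pointwise

noncomputable section

variable {H K E : Type*}
  [NormedAddCommGroup H] [InnerProductSpace ℂ H] [CompleteSpace H]
  [NormedAddCommGroup K] [InnerProductSpace ℂ K] [CompleteSpace K]
  [NormedAddCommGroup E] [InnerProductSpace ℂ E] [CompleteSpace E]

section ClmHelpers

variable {R M N : Type*} [Ring R] [AddCommGroup M] [AddCommGroup N] [Module R M] [Module R N]
  [TopologicalSpace M] [TopologicalSpace N]

lemma clm_mem_ker {f : M →L[R] N} {x : M} : x ∈ LinearMap.ker f.toLinearMap ↔ f x = 0 :=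
  LinearMap.mem_ker

lemma clm_mem_range {f : M →L[R] N} {y : N} : y ∈ LinearMap.range f.toLinearMap ↔ ∃ x, f x = y :=
  LinearMap.mem_range

lemma clm_mem_range_self (f : M →L[R] N) (x : M) : f x ∈ LinearMap.range f.toLinearMap :=
  LinearMap.mem_range_self _ x

lemma clm_ker_eq_bot' {f : M →L[R] N} : LinearMap.ker f.toLinearMap = ⊥ ↔ ∀ m, f m = 0 → m = 0 :=
  LinearMap.ker_eq_bot'

lemma clm_range_eq_top {f : M →L[R] N} : LinearMap.range f.toLinearMap = ⊤ ↔ Function.Surjective f :=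
  LinearMap.range_eq_top

end ClmHelpers

section Aux

variable {F G : Type*}
  [NormedAddCommGroup F] [InnerProductSpace ℂ F] [CompleteSpace F]
  [NormedAddCommGroup G] [InnerProductSpace ℂ G] [CompleteSpace G]

local notation "adj" => ContinuousLinearMap.adjoint

lemma aux_adjoint_lb (S : F →L[ℂ] G) (hS : Function.Surjective S) :
    ∃ c > (0:ℝ), ∀ y : G, c * ‖y‖ ≤ ‖adj S y‖ := by
  obtain ⟨C, hC0, hC⟩ := S.exists_preimage_norm_le hS
  refine ⟨C⁻¹, by positivity, fun y => ?_⟩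
  obtain ⟨x, hx, hxn⟩ := hC y
  have h1 : (‖y‖:ℝ)^2 = (⟪adj S y, x⟫).re := by
    rw [ContinuousLinearMap.adjoint_inner_left, hx, inner_self_eq_norm_sq_to_K]
    simp [← Complex.ofReal_pow]
  have h2 : (⟪adj S y, x⟫).re ≤ ‖adj S y‖ * ‖x‖ := by
    calc (⟪adj S y, x⟫).re ≤ ‖⟪adj S y, x⟫‖ := Complex.re_le_norm _
    _ ≤ ‖adj S y‖ * ‖x‖ := norm_inner_le_norm _ _
  have h3 : ‖y‖^2 ≤ ‖adj S y‖ * (C * ‖y‖) := by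
    refine h1 ▸ h2.trans ?_
    exact mul_le_mul_of_nonneg_left hxn (norm_nonneg _)
  rcases eq_or_ne y 0 with rfl | hy
  · simp
  · have hny : 0 < ‖y‖ := norm_pos_iff.2 hy
    rw [inv_mul_le_iff₀ hC0, mul_comm]
    calc ‖y‖ = ‖y‖^2 / ‖y‖ := by field_simp [pow_two]
    _ ≤ (‖adj S y‖ * (C * ‖y‖)) / ‖y‖ := by gcongr
    _ = ‖adj S y‖ * C := by field_simp

lemma aux_surj_orth_ker_le (S : F →L[ℂ] G) (hS : Function.Surjective S) :
    (LinearMap.ker S.toLinearMap)ᗮ ≤ LinearMap.range (adj S).toLinearMap := by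
  obtain ⟨c, hc0, hc⟩ := aux_adjoint_lb S hS
  set B : G →L[ℂ] G := S ∘L adj S with hB
  have hBin : ∀ y : G, (⟪B y, y⟫).re = ‖adj S y‖^2 := by
    intro y
    have : ⟪B y, y⟫ = ⟪adj S y, adj S y⟫ := by
      simp only [hB, ContinuousLinearMap.comp_apply]
      rw [← ContinuousLinearMap.adjoint_inner_right]
    rw [this, inner_self_eq_norm_sq_to_K]
    simp [← Complex.ofReal_pow]
  have hlb : ∀ y : G, c^2 * ‖y‖ ≤ ‖B y‖ := by
    intro y
    rcases eq_or_ne y 0 with rfl | hy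
    · simp
    have hny : 0 < ‖y‖ := norm_pos_iff.2 hy
    have h1 : c^2 * ‖y‖^2 ≤ (⟪B y, y⟫).re := by
      rw [hBin]
      calc c^2 * ‖y‖^2 = (c * ‖y‖)^2 := by ring
      _ ≤ ‖adj S y‖^2 := by
        have := hc y
        nlinarith [norm_nonneg (adj S y), mul_pos hc0 hny]
    have h2 : (⟪B y, y⟫).re ≤ ‖B y‖ * ‖y‖ := by
      calc (⟪B y, y⟫).re ≤ ‖⟪B y, y⟫‖ := Complex.re_le_norm _
      _ ≤ ‖B y‖ * ‖y‖ := norm_inner_le_norm _ _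
    nlinarith
  have hker : LinearMap.ker B.toLinearMap = ⊥ := by
    rw [clm_ker_eq_bot']
    intro y hy
    have := hlb y
    rw [hy] at this
    simp only [norm_zero] at this
    have : ‖y‖ ≤ 0 := by nlinarith [sq_nonneg c, pow_pos hc0 2]
    exact norm_le_zero_iff.1 this
  have hclosed : IsClosed (Set.range B) := by
    have hal : AntilipschitzWith (⟨(c^2)⁻¹, by positivity⟩ : NNReal) B := by
      apply ContinuousLinearMap.antilipschitz_of_bound
      intro x
      have := hlb x
      change ‖x‖ ≤ (c^2)⁻¹ * ‖B x‖
      rw [le_inv_mul_iff₀ (by positivity)]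
      linarith [hlb x]
    exact hal.isClosed_range B.uniformContinuous
  have hrange : LinearMap.range B.toLinearMap = ⊤ := by
    have hcs : CompleteSpace (LinearMap.range B.toLinearMap) := by
      have : (LinearMap.range B.toLinearMap : Set G) = Set.range B := by
        ext u; simp
      exact (this ▸ hclosed).isComplete.completeSpace_coe
    rw [← Submodule.orthogonal_eq_bot_iff]
    rw [Submodule.eq_bot_iff]
    intro v hv
    have hBv : ⟪B v, v⟫ = 0 := hv (B v) (clm_mem_range_self _ v)
    have h1 := hBin v
    rw [hBv] at h1
    simp only [Complex.zero_re] at h1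
    have h2 := hc v
    have hav : ‖adj S v‖ = 0 := by
      have := sq_nonneg ‖adj S v‖
      nlinarith [norm_nonneg (adj S v)]
    have : ‖v‖ ≤ 0 := by nlinarith [norm_nonneg v]
    exact norm_le_zero_iff.1 this
  set e := ContinuousLinearEquiv.ofBijective B hker hrange with he
  intro x hx
  set y := e.symm (S x) with hy
  have hBy : B y = S x := ContinuousLinearEquiv.ofBijective_apply_symm_apply B hker hrange (S x)
  have hdker : x - adj S y ∈ LinearMap.ker S.toLinearMap := by
    rw [clm_mem_ker, map_sub]
    have : S (adj S y) = B y := rfl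
    rw [this, hBy, sub_self]
  have hadjperp : adj S y ∈ (LinearMap.ker S.toLinearMap)ᗮ := by
    intro k hk
    rw [ContinuousLinearMap.adjoint_inner_right]
    rw [clm_mem_ker] at hk
    rw [hk, inner_zero_left]
  have hdperp : x - adj S y ∈ (LinearMap.ker S.toLinearMap)ᗮ := Submodule.sub_mem _ hx hadjperp
  have : x - adj S y = 0 := by
    have := hdperp _ hdker
    rwa [inner_self_eq_zero] at this
  exact ⟨y, by rw [← sub_eq_zero]; rw [← neg_sub]; simp [this]⟩

lemma aux_range_adjoint_eq (S : F →L[ℂ] G) (hcl : IsClosed (Set.range S)) :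
    LinearMap.range (adj S).toLinearMap = (LinearMap.ker S.toLinearMap)ᗮ := by
  apply le_antisymm
  · rintro _ ⟨p, rfl⟩ k hk
    rw [ContinuousLinearMap.coe_coe, ContinuousLinearMap.adjoint_inner_right]
    rw [clm_mem_ker] at hk
    rw [hk, inner_zero_left]
  · set M := LinearMap.range S.toLinearMap with hM
    have hMcl : IsClosed (M : Set G) := by
      have : (M : Set G) = Set.range S := by ext u; simp [hM]
      rw [this]; exact hcl
    have : CompleteSpace ↥M := hMcl.isComplete.completeSpace_coe
    set Sh : F →L[ℂ] ↥M := S.codRestrict M (fun x => clm_mem_range_self _ x) with hSh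
    have hShsurj : Function.Surjective Sh := by
      rintro ⟨m, x, rfl⟩
      exact ⟨x, rfl⟩
    have hkerSh : LinearMap.ker Sh.toLinearMap = LinearMap.ker S.toLinearMap := by
      ext u
      simp only [clm_mem_ker]
      constructor
      · intro h
        have : (Sh u : G) = 0 := by rw [h]; rfl
        simpa [hSh] using this
      · intro h
        apply Subtype.ext
        simpa [hSh] using h
    have hadj : ∀ m : ↥M, adj Sh m = adj S (m : G) := by
      intro m
      apply ext_inner_left ℂ
      intro u
      rw [ContinuousLinearMap.adjoint_inner_right, ContinuousLinearMap.adjoint_inner_right,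
        Submodule.coe_inner]
      rfl
    intro x hx
    rw [← hkerSh] at hx
    obtain ⟨m, hm⟩ := aux_surj_orth_ker_le Sh hShsurj hx
    exact ⟨(m : G), by rw [ContinuousLinearMap.coe_coe, ← hadj]; exact hm⟩

lemma aux_image_closed (D : F →L[ℂ] G) (hDr : IsClosed (Set.range D))
    (N : Submodule ℂ F) (hN : IsClosed (N : Set F)) (hkN : LinearMap.ker D.toLinearMap ≤ N) :
    IsClosed (D '' (N : Set F)) := by
  set E₁ : Submodule ℂ F := (LinearMap.ker D.toLinearMap)ᗮ with hE₁
  have hE₁cl : IsClosed (E₁ : Set F) := Submodule.isClosed_orthogonal _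
  have : CompleteSpace ↥E₁ := hE₁cl.isComplete.completeSpace_coe
  set F₁ : Submodule ℂ G := LinearMap.range D.toLinearMap with hF₁
  have hF₁cl : IsClosed (F₁ : Set G) := by
    have : (F₁ : Set G) = Set.range D := by ext u; simp [hF₁]
    rw [this]; exact hDr
  have : CompleteSpace ↥F₁ := hF₁cl.isComplete.completeSpace_coe
  have : CompleteSpace ↥(LinearMap.ker D.toLinearMap) :=
    (ContinuousLinearMap.isClosed_ker D).isComplete.completeSpace_coe
  set D₀ : ↥E₁ →L[ℂ] ↥F₁ :=
    (D ∘L E₁.subtypeL).codRestrict F₁ (fun x => clm_mem_range_self _ _) with hD₀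
  have hD₀app : ∀ x : ↥E₁, (D₀ x : G) = D (x : F) := fun x => rfl
  have hker : LinearMap.ker D₀.toLinearMap = ⊥ := by
    rw [clm_ker_eq_bot']
    intro x hx
    have hx0 : D (x : F) = 0 := by
      have : (D₀ x : G) = 0 := by rw [hx]; rfl
      rwa [hD₀app] at this
    have hxk : (x : F) ∈ LinearMap.ker D.toLinearMap := hx0
    have := x.2 _ hxk
    rw [inner_self_eq_zero] at this
    exact Subtype.ext this
  have hrange : LinearMap.range D₀.toLinearMap = ⊤ := by
    rw [clm_range_eq_top]
    rintro ⟨w, hw⟩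
    obtain ⟨q, rfl⟩ := hw
    obtain ⟨k, hk, p, hp, hqe⟩ := (LinearMap.ker D.toLinearMap).exists_add_mem_mem_orthogonal q
    refine ⟨⟨p, hp⟩, Subtype.ext ?_⟩
    rw [hD₀app]
    show D p = D q
    rw [hqe, map_add, clm_mem_ker.1 hk, zero_add]
  set e := ContinuousLinearEquiv.ofBijective D₀ hker hrange with he
  have heapp : ∀ x : ↥E₁, e x = D₀ x := fun x =>
    congrFun (ContinuousLinearEquiv.coeFn_ofBijective D₀ hker hrange) x
  have himg : D '' (N : Set F) =
      Subtype.val '' (⇑e '' (Subtype.val ⁻¹' (N : Set F) : Set ↥E₁)) := by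
    apply Set.Subset.antisymm
    · rintro _ ⟨q, hq, rfl⟩
      obtain ⟨k, hk, p, hp, hqe⟩ := (LinearMap.ker D.toLinearMap).exists_add_mem_mem_orthogonal q
      have hpN : p ∈ N := by
        have : p = q - k := by rw [hqe]; abel
        rw [this]
        exact Submodule.sub_mem _ hq (hkN hk)
      refine ⟨e ⟨p, hp⟩, ⟨⟨p, hp⟩, hpN, rfl⟩, ?_⟩
      rw [heapp, hD₀app]
      show D p = D q
      rw [hqe, map_add, clm_mem_ker.1 hk, zero_add]
    · rintro _ ⟨_, ⟨p, hp, rfl⟩, rfl⟩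
      rw [heapp, hD₀app]
      exact ⟨(p : F), hp, rfl⟩
  rw [himg]
  apply (hF₁cl.isClosedEmbedding_subtypeVal).isClosedMap
  apply e.toHomeomorph.isClosedMap
  exact hN.preimage continuous_subtype_val

open scoped Pointwise

lemma aux_VkerT_closed {H : Type*} [NormedAddCommGroup H] [InnerProductSpace ℂ H]
    [CompleteSpace H] (T : F →L[ℂ] G) (V : F →L[ℂ] H) (hV : Function.Surjective V)
    (hker : IsClosed ((LinearMap.ker T.toLinearMap : Set F) + (LinearMap.ker V.toLinearMap : Set F))) :
    IsClosed (V '' (LinearMap.ker T.toLinearMap : Set F)) := by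
  set W : Set F := (LinearMap.ker T.toLinearMap : Set F) + (LinearMap.ker V.toLinearMap : Set F) with hW
  have himg : V '' (LinearMap.ker T.toLinearMap : Set F) = V '' W := by
    apply Set.Subset.antisymm
    · rintro _ ⟨a, ha, rfl⟩
      exact ⟨a, ⟨a, ha, 0, by simp, by simp⟩, rfl⟩
    · rintro _ ⟨w, hw, rfl⟩
      obtain ⟨a, ha, b, hb, rfl⟩ := hw
      refine ⟨a, ha, ?_⟩
      simp only [map_add, clm_mem_ker.1 hb, add_zero]
  have hpre : V ⁻¹' (V '' W) = W := by
    apply Set.Subset.antisymm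
    · rintro x hx
      obtain ⟨w, hw, hVx⟩ := hx
      obtain ⟨a, ha, b, hb, rfl⟩ := hw
      have hVx' : V a + V b = V x := by simpa [map_add] using hVx
      have hxab : x - a - b ∈ LinearMap.ker V.toLinearMap := by
        rw [clm_mem_ker]
        simp only [map_sub]
        rw [← hVx']
        abel
      have hxa : x - a ∈ LinearMap.ker V.toLinearMap := by
        have h2 := Submodule.add_mem _ hb hxab
        have he : b + (x - a - b) = x - a := by abel
        rwa [he] at h2
      refine ⟨a, ha, x - a, hxa, ?_⟩
      show a + (x - a) = x
      abel
    · exact Set.subset_preimage_image V W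
  have hopen : IsOpenMap V := ContinuousLinearMap.isOpenMap V hV
  have hcompl : (V '' W)ᶜ = V '' (Wᶜ) := by
    apply Set.Subset.antisymm
    · intro y hy
      obtain ⟨x, rfl⟩ := hV y
      refine ⟨x, fun hxW => hy ⟨x, hxW, rfl⟩, rfl⟩
    · rintro _ ⟨x, hx, rfl⟩ hmem
      exact hx (by rw [← hpre]; exact hmem)
  rw [himg, ← isOpen_compl_iff, hcompl]
  exact hopen _ hker.isOpen_compl

lemma aux_rangeL_closed {H : Type*} [NormedAddCommGroup H] [InnerProductSpace ℂ H]
    [CompleteSpace H] (T : F →L[ℂ] G) (V : F →L[ℂ] H)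
    (hT : Function.Surjective T) (hV : Function.Surjective V)
    (hker : IsClosed ((LinearMap.ker T.toLinearMap : Set F) + (LinearMap.ker V.toLinearMap : Set F))) :
    IsClosed (Set.range (fun x : F => (T x, V x))) := by
  obtain ⟨C, hC0, hC⟩ := T.exists_preimage_norm_le hT
  have hVk := aux_VkerT_closed T V hV hker
  apply IsSeqClosed.isClosed
  intro xs p hmem htend
  obtain ⟨xn, hxn⟩ : ∃ xn : ℕ → F, ∀ n, xs n = (T (xn n), V (xn n)) := by
    refine ⟨fun n => (hmem n).choose, fun n => ((hmem n).choose_spec).symm⟩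
  have hfst : Filter.Tendsto (fun n => T (xn n)) Filter.atTop (nhds p.1) := by
    have h := (continuous_fst.tendsto p).comp htend
    have he : (Prod.fst ∘ xs) = fun n => T (xn n) := by
      funext n; show (xs n).1 = _; rw [hxn n]
    rwa [he] at h
  have hsnd : Filter.Tendsto (fun n => V (xn n)) Filter.atTop (nhds p.2) := by
    have h := (continuous_snd.tendsto p).comp htend
    have he : (Prod.snd ∘ xs) = fun n => V (xn n) := by
      funext n; show (xs n).2 = _; rw [hxn n]
    rwa [he] at h
  obtain ⟨x, hx⟩ := hT p.1
  -- pick approximate preimages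
  have hu : ∀ n, ∃ u : F, T u = T (xn n) - T x ∧ ‖u‖ ≤ C * ‖T (xn n) - T x‖ :=
    fun n => hC _
  choose u hu1 hu2 using hu
  have hTdiff : Filter.Tendsto (fun n => T (xn n) - T x) Filter.atTop (nhds 0) := by
    have h := hfst.sub (tendsto_const_nhds :
      Filter.Tendsto (fun _ : ℕ => T x) Filter.atTop (nhds (T x)))
    have h2 : p.1 - T x = 0 := by rw [hx, sub_self]
    rw [h2] at h
    exact h
  have hu0 : Filter.Tendsto u Filter.atTop (nhds 0) := by
    apply squeeze_zero_norm hu2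
    simpa using (hTdiff.norm).const_mul C
  set k : ℕ → F := fun n => xn n - x - u n with hk
  have hkmem : ∀ n, k n ∈ LinearMap.ker T.toLinearMap := by
    intro n
    rw [clm_mem_ker]
    simp only [hk, map_sub, hu1 n]
    abel
  have hVk_tend : Filter.Tendsto (fun n => V (k n)) Filter.atTop (nhds (p.2 - V x)) := by
    have : (fun n => V (k n)) = fun n => V (xn n) - V x - V (u n) := by
      funext n; simp [hk, map_sub]
    rw [this]
    have hVu : Filter.Tendsto (fun n => V (u n)) Filter.atTop (nhds 0) := by
      have := (V.continuous.tendsto 0).comp hu0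
      rw [map_zero] at this
      exact this
    have h3 : Filter.Tendsto (fun n => V (xn n) - V x - V (u n)) Filter.atTop
        (nhds (p.2 - V x - 0)) :=
      (hsnd.sub (tendsto_const_nhds :
        Filter.Tendsto (fun _ : ℕ => V x) Filter.atTop (nhds (V x)))).sub hVu
    rw [sub_zero] at h3
    exact h3
  have hmem2 : p.2 - V x ∈ V '' (LinearMap.ker T.toLinearMap : Set F) := by
    apply hVk.mem_of_tendsto hVk_tend
    exact Filter.Eventually.of_forall fun n => ⟨k n, hkmem n, rfl⟩
  obtain ⟨kk, hkk, hVkk⟩ := hmem2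
  refine ⟨x + kk, ?_⟩
  have hTkk : T kk = 0 := clm_mem_ker.1 hkk
  have : T (x + kk) = p.1 := by rw [map_add, hTkk, add_zero, hx]
  have h2 : V (x + kk) = p.2 := by rw [map_add, hVkk]; abel
  ext <;> simp [this, h2]

variable {H' : Type*} [NormedAddCommGroup H'] [InnerProductSpace ℂ H'] [CompleteSpace H']

lemma aux_rangeTV (T : F →L[ℂ] G) (V : F →L[ℂ] H')
    (hT : Function.Surjective T) (hV : Function.Surjective V)
    (hker : IsClosed ((LinearMap.ker T.toLinearMap : Set F) + (LinearMap.ker V.toLinearMap : Set F))) :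
    LinearMap.range (adj T).toLinearMap ⊔ LinearMap.range (adj V).toLinearMap =
      (LinearMap.ker T.toLinearMap ⊓ LinearMap.ker V.toLinearMap)ᗮ := by
  set eqP : WithLp 2 (G × H') ≃L[ℂ] G × H' := WithLp.prodContinuousLinearEquiv 2 ℂ G H'
    with heqP
  set L2 : F →L[ℂ] WithLp 2 (G × H') :=
    (eqP.symm : (G × H') →L[ℂ] WithLp 2 (G × H')).comp (T.prod V) with hL2
  have hL2app : ∀ x : F, L2 x = eqP.symm (T x, V x) := fun x => rfl
  have hfst : ∀ x : F, (L2 x).fst = T x := by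
    intro x; rfl
  have hsnd : ∀ x : F, (L2 x).snd = V x := by
    intro x; rfl
  have hrangecl : IsClosed (Set.range L2) := by
    have h1 : Set.range L2 = (eqP.symm) '' (Set.range (fun x : F => (T x, V x))) := by
      ext q
      constructor
      · rintro ⟨x, rfl⟩; exact ⟨(T x, V x), ⟨x, rfl⟩, (hL2app x).symm⟩
      · rintro ⟨_, ⟨x, rfl⟩, rfl⟩; exact ⟨x, rfl⟩
    rw [h1]
    exact (eqP.symm.toHomeomorph.isClosedMap) _ (aux_rangeL_closed T V hT hV hker)
  have hkerL2 : LinearMap.ker L2.toLinearMap = LinearMap.ker T.toLinearMap ⊓ LinearMap.ker V.toLinearMap := by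
    ext x
    simp only [clm_mem_ker, Submodule.mem_inf]
    constructor
    · intro h
      constructor
      · rw [← hfst x, h]; rfl
      · rw [← hsnd x, h]; rfl
    · rintro ⟨h1, h2⟩
      rw [hL2app, h1, h2]
      simp
  have hadjL2 : ∀ p : WithLp 2 (G × H'), adj L2 p = adj T p.fst + adj V p.snd := by
    intro p
    apply ext_inner_left ℂ
    intro u
    rw [ContinuousLinearMap.adjoint_inner_right]
    rw [inner_add_right, ContinuousLinearMap.adjoint_inner_right,
      ContinuousLinearMap.adjoint_inner_right]
    rw [WithLp.prod_inner_apply]; rfl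
  have hre := aux_range_adjoint_eq L2 hrangecl
  rw [hkerL2] at hre
  rw [← hre]
  apply le_antisymm
  · apply sup_le
    · rintro _ ⟨y, rfl⟩
      refine ⟨eqP.symm (y, 0), ?_⟩
      rw [ContinuousLinearMap.coe_coe, hadjL2]
      have h1 : (eqP.symm (y, (0:H'))).fst = y := rfl
      have h2 : (eqP.symm (y, (0:H'))).snd = (0:H') := rfl
      rw [h1, h2, map_zero, add_zero]; rfl
    · rintro _ ⟨z, rfl⟩
      refine ⟨eqP.symm (0, z), ?_⟩
      rw [ContinuousLinearMap.coe_coe, hadjL2]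
      have h1 : (eqP.symm ((0:G), z)).fst = (0:G) := rfl
      have h2 : (eqP.symm ((0:G), z)).snd = z := rfl
      rw [h1, h2, map_zero, zero_add]; rfl
  · rintro _ ⟨p, rfl⟩
    rw [ContinuousLinearMap.coe_coe, hadjL2]
    exact Submodule.add_mem_sup (clm_mem_range_self _ _) (clm_mem_range_self _ _)

end Aux

open ContinuousLinearMap in
lemma aux_min_iff (JK : K →L[ℂ] K) (hJKsa : IsSelfAdjoint JK)
    (JE : E →L[ℂ] E) (hJEsa : IsSelfAdjoint JE)
    (T : H →L[ℂ] K) (V : H →L[ℂ] E) (ρ : ℝ)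
    (hpos : IsPosSemidef (smOp JK JE T V ρ)) (z₀ : E) :
    (smSet JK JE T V ρ z₀).Nonempty ↔
      ((ρ:ℂ) • ContinuousLinearMap.adjoint V (JE z₀)) ∈
        LinearMap.range (smOp JK JE T V ρ).toLinearMap := by
  set A : H →L[ℂ] H := smOp JK JE T V ρ with hA
  set w : H := (ρ:ℂ) • ContinuousLinearMap.adjoint V (JE z₀) with hw
  have hAapp : ∀ x : H, A x = adjoint T (JK (T x)) + (ρ:ℂ) • adjoint V (JE (V x)) := by
    intro x
    simp [hA, smOp, ContinuousLinearMap.add_apply, ContinuousLinearMap.comp_apply,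
      ContinuousLinearMap.smul_apply]
  have hJKsym : ∀ a b, ⟪JK a, b⟫ = ⟪a, JK b⟫ := by
    intro a b
    conv_lhs => rw [← hJKsa.adjoint_eq]
    rw [ContinuousLinearMap.adjoint_inner_left]
  have hJEsym : ∀ a b, ⟪JE a, b⟫ = ⟪a, JE b⟫ := by
    intro a b
    conv_lhs => rw [← hJEsa.adjoint_eq]
    rw [ContinuousLinearMap.adjoint_inner_left]
  have hsym : ∀ u v : H, ⟪A u, v⟫ = ⟪u, A v⟫ := by
    intro u v
    rw [hAapp, hAapp, inner_add_left, inner_add_right, inner_smul_left, inner_smul_right]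
    rw [ContinuousLinearMap.adjoint_inner_left, ContinuousLinearMap.adjoint_inner_right,
      ContinuousLinearMap.adjoint_inner_left, ContinuousLinearMap.adjoint_inner_right]
    rw [hJKsym, hJEsym, Complex.conj_ofReal]
  set Fn : H → ℝ := fun x =>
    (⟪JK (T x), T x⟫).re + ρ * (⟪JE (V x - z₀), V x - z₀⟫).re with hFn
  have hsm : ∀ xt : H, xt ∈ smSet JK JE T V ρ z₀ ↔ ∀ x, Fn xt ≤ Fn x := by
    intro xt; rfl
  have hFeq : ∀ x : H, Fn x = (⟪A x, x⟫).re - 2 * ((⟪w, x⟫).re)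
      + ρ * (⟪JE z₀, z₀⟫).re := by
    intro x
    have e1 : ⟪JE (V x - z₀), V x - z₀⟫ = ⟪JE (V x), V x⟫ - ⟪JE (V x), z₀⟫
        - ⟪JE z₀, V x⟫ + ⟪JE z₀, z₀⟫ := by
      rw [map_sub, inner_sub_left, inner_sub_right, inner_sub_right]
      ring
    have e2 : (⟪JE (V x), z₀⟫).re = (⟪JE z₀, V x⟫).re := by
      rw [hJEsym]
      have hcs : (inner ℂ (V x) (JE z₀) : ℂ) = (starRingEnd ℂ) (inner ℂ (JE z₀) (V x)) :=
        (inner_conj_symm _ _).symm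
      rw [hcs, Complex.conj_re]
    have e3 : ⟪A x, x⟫ = ⟪JK (T x), T x⟫ + (ρ:ℂ) * ⟪JE (V x), V x⟫ := by
      rw [hAapp, inner_add_left, inner_smul_left,
        ContinuousLinearMap.adjoint_inner_left, ContinuousLinearMap.adjoint_inner_left,
        Complex.conj_ofReal]
    have e4 : ⟪w, x⟫ = (ρ:ℂ) * ⟪JE z₀, V x⟫ := by
      rw [hw, inner_smul_left, ContinuousLinearMap.adjoint_inner_left, Complex.conj_ofReal]
    have hFx : Fn x = (⟪JK (T x), T x⟫).re + ρ * ((⟪JE (V x), V x⟫).re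
        - (⟪JE (V x), z₀⟫).re - (⟪JE z₀, V x⟫).re + (⟪JE z₀, z₀⟫).re) := by
      simp only [hFn, e1, Complex.add_re, Complex.sub_re]
    have hAx : (⟪A x, x⟫).re = (⟪JK (T x), T x⟫).re + ρ * (⟪JE (V x), V x⟫).re := by
      rw [e3]
      simp [Complex.add_re, Complex.mul_re]
    have hwx : (⟪w, x⟫).re = ρ * (⟪JE z₀, V x⟫).re := by
      rw [e4]
      simp [Complex.mul_re]
    rw [hFx, hAx, hwx, e2]
    ring
  have hGdiff : ∀ xt x : H, Fn x - Fn xt = (⟪A (x - xt), x - xt⟫).re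
      + 2 * ((⟪A xt, x - xt⟫).re - (⟪w, x - xt⟫).re) := by
    intro xt x
    have e5 : ⟪A (x - xt), x - xt⟫ = ⟪A x, x⟫ - ⟪A x, xt⟫ - ⟪A xt, x⟫ + ⟪A xt, xt⟫ := by
      rw [map_sub, inner_sub_left, inner_sub_right, inner_sub_right]
      ring
    have e6 : (⟪A x, xt⟫).re = (⟪A xt, x⟫).re := by
      rw [hsym]
      have hcs : (inner ℂ x (A xt) : ℂ) = (starRingEnd ℂ) (inner ℂ (A xt) x) :=
        (inner_conj_symm _ _).symm
      rw [hcs, Complex.conj_re]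
    have e7 : ⟪A xt, x - xt⟫ = ⟪A xt, x⟫ - ⟪A xt, xt⟫ := inner_sub_right _ _ _
    have e8 : ⟪w, x - xt⟫ = ⟪w, x⟫ - ⟪w, xt⟫ := inner_sub_right _ _ _
    rw [hFeq, hFeq, e5, e7, e8]
    simp only [Complex.add_re, Complex.sub_re]
    rw [e6]
    ring
  constructor
  · rintro ⟨xt, hxt⟩
    rw [hsm] at hxt
    refine ⟨xt, ?_⟩
    have hb : ∀ y : H, (⟪A xt, y⟫).re - (⟪w, y⟫).re = 0 := by
      intro y
      set a : ℝ := (⟪A y, y⟫).re with ha'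
      set b : ℝ := (⟪A xt, y⟫).re - (⟪w, y⟫).re with hb'
      have ha : 0 ≤ a := (hpos y).2
      have hab : ∀ t : ℝ, 0 ≤ t^2 * a + 2 * (t * b) := by
        intro t
        have h := hxt (xt + (t:ℂ) • y)
        have hdiff := hGdiff xt (xt + (t:ℂ) • y)
        have hxxt : xt + (t:ℂ) • y - xt = (t:ℂ) • y := by abel
        rw [hxxt] at hdiff
        have i1 : ⟪A ((t:ℂ) • y), (t:ℂ) • y⟫ = ((t:ℂ)*(t:ℂ)) * ⟪A y, y⟫ := by
          rw [map_smul, inner_smul_left, inner_smul_right, Complex.conj_ofReal]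
          ring
        have i2 : ⟪A xt, (t:ℂ) • y⟫ = (t:ℂ) * ⟪A xt, y⟫ := inner_smul_right _ _ _
        have i3 : ⟪w, (t:ℂ) • y⟫ = (t:ℂ) * ⟪w, y⟫ := inner_smul_right _ _ _
        rw [i1, i2, i3] at hdiff
        have r1 : (((t:ℂ)*(t:ℂ)) * ⟪A y, y⟫).re = t^2 * a := by
          simp only [Complex.mul_re, Complex.mul_im, Complex.ofReal_re, Complex.ofReal_im, ha']
          ring
        have r2 : ((t:ℂ) * ⟪A xt, y⟫).re = t * (⟪A xt, y⟫).re := by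
          simp [Complex.mul_re]
        have r3 : ((t:ℂ) * ⟪w, y⟫).re = t * (⟪w, y⟫).re := by
          simp [Complex.mul_re]
        rw [r1, r2, r3] at hdiff
        have : 0 ≤ Fn (xt + (t:ℂ) • y) - Fn xt := by linarith
        rw [hdiff] at this
        rw [hb']
        linarith
      by_contra hbne
      have hb2 : 0 < b^2 := by positivity
      have hc : (0:ℝ) < a + 1 := by linarith
      have h := hab (-(b / (a + 1)))
      have key : (-(b/(a+1)))^2 * a + 2 * ((-(b/(a+1))) * b)
          = (b^2 * a - 2*b^2*(a+1))/(a+1)^2 := by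
        field_simp
        ring
      rw [key, le_div_iff₀ (pow_pos hc 2), zero_mul] at h
      nlinarith [mul_nonneg (le_of_lt hb2) ha]
    have hzero : ∀ y : H, ⟪A xt - w, y⟫ = 0 := by
      intro y
      have husub : ⟪A xt - w, y⟫ = ⟪A xt, y⟫ - ⟪w, y⟫ := inner_sub_left _ _ _
      have h1 := hb y
      have h2 := hb (Complex.I • y)
      rw [inner_smul_right, inner_smul_right] at h2
      have him : (⟪A xt, y⟫).im - (⟪w, y⟫).im = 0 := by
        simp only [Complex.mul_re, Complex.I_re, Complex.I_im] at h2
        linarith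
      rw [husub]
      apply Complex.ext
      · simp [Complex.sub_re, h1]
      · simp [Complex.sub_im, him]
    have : A xt - w = 0 := by
      have := hzero (A xt - w)
      rwa [inner_self_eq_zero] at this
    rw [sub_eq_zero] at this
    exact this

  · rintro ⟨xt, hxt⟩
    refine ⟨xt, ?_⟩
    rw [hsm]
    intro x
    have hdiff := hGdiff xt x
    have hxt' : A xt = w := hxt
    rw [hxt'] at hdiff
    have hpos' := (hpos (x - xt)).2
    have : (⟪w, x - xt⟫).re - (⟪w, x - xt⟫).re = 0 := sub_self _
    rw [this, mul_zero, add_zero] at hdiff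
    linarith

set_option maxHeartbeats 2000000 in
set_option synthInstance.maxHeartbeats 1000000 in
open ContinuousLinearMap in
theorem stmt7
    (JK : K →L[ℂ] K) (hJKsa : IsSelfAdjoint JK) (hJK2 : JK ∘L JK = 1)
    (JE : E →L[ℂ] E) (hJEsa : IsSelfAdjoint JE) (hJE2 : JE ∘L JE = 1)
    (T : H →L[ℂ] K) (V : H →L[ℂ] E)
    (hT : Function.Surjective T) (hV : Function.Surjective V)
    (ρ : ℝ) (hρ : ρ ≠ 0)
    (hpos : IsPosSemidef (smOp JK JE T V ρ))
    (hker : IsClosed ((LinearMap.ker (T : H →ₗ[ℂ] K) : Set H) + (LinearMap.ker (V : H →ₗ[ℂ] E) : Set H))) :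
    ((∀ z₀ : E, (∀ x : H, smOp JK JE T V ρ x = 0 → ⟪JE z₀, V x⟫ = 0) →
        (smSet JK JE T V ρ z₀).Nonempty) ↔
      IsClosed (Set.range (fun x : H => (T x, V x)) + RLperp JK JE T V ρ)) ∧
    (IsClosed (Set.range (fun x : H => (T x, V x)) + RLperp JK JE T V ρ) ↔
      IsClosed (Set.range (fun x : H => smOp JK JE T V ρ x))) := by
  classical
  set A : H →L[ℂ] H := smOp JK JE T V ρ with hA
  set D : K × E →L[ℂ] H :=
    ((adjoint T) ∘L JK).comp (ContinuousLinearMap.fst ℂ K E) +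
      (ρ:ℂ) • (((adjoint V) ∘L JE).comp (ContinuousLinearMap.snd ℂ K E)) with hD
  have hρC : (ρ:ℂ) ≠ 0 := Complex.ofReal_ne_zero.2 hρ
  have hDapp : ∀ p : K × E, D p = adjoint T (JK p.1) + (ρ:ℂ) • adjoint V (JE p.2) := by
    intro p
    simp [hD, ContinuousLinearMap.add_apply, ContinuousLinearMap.comp_apply,
      ContinuousLinearMap.smul_apply]
  have hAapp : ∀ x : H, A x = adjoint T (JK (T x)) + (ρ:ℂ) • adjoint V (JE (V x)) := by
    intro x
    simp [hA, smOp, ContinuousLinearMap.add_apply, ContinuousLinearMap.comp_apply,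
      ContinuousLinearMap.smul_apply]
  have hDL : ∀ x : H, D (T x, V x) = A x := by
    intro x
    rw [hDapp, hAapp]
  have hJKinv : ∀ y, JK (JK y) = y := by
    intro y
    have := ContinuousLinearMap.ext_iff.1 hJK2 y
    simpa using this
  have hJEinv : ∀ z, JE (JE z) = z := by
    intro z
    have := ContinuousLinearMap.ext_iff.1 hJE2 z
    simpa using this
  have hJKsym : ∀ a b, ⟪JK a, b⟫ = ⟪a, JK b⟫ := by
    intro a b
    conv_lhs => rw [← hJKsa.adjoint_eq]
    rw [ContinuousLinearMap.adjoint_inner_left]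
  have hJEsym : ∀ a b, ⟪JE a, b⟫ = ⟪a, JE b⟫ := by
    intro a b
    conv_lhs => rw [← hJEsa.adjoint_eq]
    rw [ContinuousLinearMap.adjoint_inner_left]
  have hsym : ∀ u v : H, ⟪A u, v⟫ = ⟪u, A v⟫ := by
    intro u v
    rw [hAapp, hAapp, inner_add_left, inner_add_right, inner_smul_left, inner_smul_right]
    rw [ContinuousLinearMap.adjoint_inner_left, ContinuousLinearMap.adjoint_inner_right,
      ContinuousLinearMap.adjoint_inner_left, ContinuousLinearMap.adjoint_inner_right]
    rw [hJKsym, hJEsym, Complex.conj_ofReal]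
  have hinnerD : ∀ (x : H) (p : K × E),
      ⟪x, D p⟫ = ⟪JK (T x), p.1⟫ + (ρ:ℂ) * ⟪JE (V x), p.2⟫ := by
    intro x p
    rw [hDapp, inner_add_right, inner_smul_right, ContinuousLinearMap.adjoint_inner_right,
      ContinuousLinearMap.adjoint_inner_right, hJKsym, hJEsym]
  have hperp : RLperp JK JE T V ρ = (LinearMap.ker D.toLinearMap : Set (K × E)) := by
    ext p
    simp only [RLperp, Set.mem_setOf_eq, SetLike.mem_coe, clm_mem_ker]
    constructor
    · intro hp
      have h0 : ⟪D p, D p⟫ = 0 := by rw [hinnerD]; exact hp (D p)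
      rwa [inner_self_eq_zero] at h0
    · intro hp x
      rw [← hinnerD, hp, inner_zero_right]
  have hRstmt : Set.range (fun x : H => (T x, V x)) =
      ((LinearMap.range (T.prod V).toLinearMap : Submodule ℂ (K × E)) : Set (K × E)) := by
    ext p
    simp only [Set.mem_range, SetLike.mem_coe, clm_mem_range,
      ContinuousLinearMap.prod_apply]
  have hSet : Set.range (fun x : H => (T x, V x)) + RLperp JK JE T V ρ =
      ((LinearMap.range (T.prod V).toLinearMap ⊔ LinearMap.ker D.toLinearMap : Submodule ℂ (K × E)) :
        Set (K × E)) := by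
    rw [hRstmt, hperp, Submodule.coe_sup]
  have hkerperp : (LinearMap.ker A.toLinearMap)ᗮ = (LinearMap.range A.toLinearMap).topologicalClosure := by
    have h1 : (LinearMap.range A.toLinearMap)ᗮ = LinearMap.ker A.toLinearMap := by
      ext v
      constructor
      · intro hv
        have h2 : ∀ x : H, ⟪x, A v⟫ = 0 := by
          intro x
          rw [← hsym]
          exact hv (A x) (clm_mem_range_self _ x)
        have := h2 (A v)
        rwa [inner_self_eq_zero] at this
      · intro hv u hu
        obtain ⟨x, rfl⟩ := clm_mem_range.1 hu
        rw [hsym, clm_mem_ker.1 hv, inner_zero_right]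
    rw [← h1, Submodule.orthogonal_orthogonal_eq_closure]
  have hcond : ∀ z₀ : E, (∀ x : H, A x = 0 → ⟪JE z₀, V x⟫ = 0) ↔
      ((ρ:ℂ) • adjoint V (JE z₀)) ∈ (LinearMap.ker A.toLinearMap)ᗮ := by
    intro z₀
    constructor
    · intro hz u hu
      rw [clm_mem_ker] at hu
      rw [inner_smul_right, ContinuousLinearMap.adjoint_inner_right, ← inner_conj_symm,
        hz u hu, map_zero, mul_zero]
    · intro hz x hx
      have h2 := hz x (clm_mem_ker.2 hx)
      rw [inner_smul_right, ContinuousLinearMap.adjoint_inner_right,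
        ← inner_conj_symm] at h2
      have h3 : (starRingEnd ℂ) ⟪JE z₀, V x⟫ = 0 :=
        (mul_eq_zero.1 h2).resolve_left hρC
      have h4 := congrArg (starRingEnd ℂ) h3
      simpa using h4
  have hkerTV : LinearMap.ker T.toLinearMap ⊓ LinearMap.ker V.toLinearMap ≤ LinearMap.ker A.toLinearMap := by
    intro x hx
    obtain ⟨h1, h2⟩ := Submodule.mem_inf.1 hx
    rw [clm_mem_ker] at h1 h2 ⊢
    rw [hAapp, h1, h2]
    simp
  have hrangeAsub : Set.range (fun x : H => A x) = ((LinearMap.range A.toLinearMap : Submodule ℂ H) :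
      Set H) := by
    ext u
    simp only [Set.mem_range, SetLike.mem_coe, clm_mem_range]
  -- (3) → (2)
  have h32 : IsClosed (Set.range (fun x : H => A x)) →
      IsClosed (Set.range (fun x : H => (T x, V x)) + RLperp JK JE T V ρ) := by
    intro h3
    rw [hSet]
    have hpre : ((LinearMap.range (T.prod V).toLinearMap ⊔ LinearMap.ker D.toLinearMap : Submodule ℂ (K × E)) :
        Set (K × E)) = ⇑D ⁻¹' (Set.range (fun x : H => A x)) := by
      ext p
      simp only [SetLike.mem_coe, Set.mem_preimage, Set.mem_range]
      constructor
      · intro hp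
        obtain ⟨a, ha, b, hb, rfl⟩ := Submodule.mem_sup.1 hp
        obtain ⟨x, rfl⟩ := clm_mem_range.1 ha
        refine ⟨x, ?_⟩
        rw [map_add, clm_mem_ker.1 hb, add_zero]
        exact (hDL x).symm
      · rintro ⟨x, hx⟩
        apply Submodule.mem_sup.2
        refine ⟨(T x, V x), ⟨x, rfl⟩, p - (T x, V x), ?_, by abel⟩
        rw [clm_mem_ker, map_sub, hDL, hx, sub_self]
    rw [hpre]
    exact h3.preimage D.continuous
  -- (2) → (3)
  have h23 : IsClosed (Set.range (fun x : H => (T x, V x)) + RLperp JK JE T V ρ) →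
      IsClosed (Set.range (fun x : H => A x)) := by
    intro h2'
    rw [hSet] at h2'
    set eqP : WithLp 2 (K × E) ≃L[ℂ] K × E := WithLp.prodContinuousLinearEquiv 2 ℂ K E
      with heqP
    set L2 : H →L[ℂ] WithLp 2 (K × E) :=
      (eqP.symm : (K × E) →L[ℂ] WithLp 2 (K × E)).comp (T.prod V) with hL2
    set D2 : WithLp 2 (K × E) →L[ℂ] H :=
      D.comp (eqP : WithLp 2 (K × E) →L[ℂ] K × E) with hD2
    have hD2app : ∀ q, D2 q = D (eqP q) := fun q => rfl
    have hL2app : ∀ x : H, eqP (L2 x) = (T x, V x) := by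
      intro x
      show eqP (eqP.symm ((T.prod V) x)) = (T x, V x)
      rw [eqP.apply_symm_apply]
      rfl
    set N : Submodule ℂ (WithLp 2 (K × E)) := LinearMap.range L2.toLinearMap ⊔ LinearMap.ker D2.toLinearMap
      with hN
    have hNpre : (N : Set (WithLp 2 (K × E))) =
        ⇑eqP ⁻¹' ((LinearMap.range (T.prod V).toLinearMap ⊔ LinearMap.ker D.toLinearMap : Submodule ℂ (K × E)) :
          Set (K × E)) := by
      ext q
      simp only [SetLike.mem_coe, Set.mem_preimage]
      constructor
      · intro hq
        obtain ⟨a, ha, b, hb, rfl⟩ := Submodule.mem_sup.1 hq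
        obtain ⟨x, rfl⟩ := clm_mem_range.1 ha
        apply Submodule.mem_sup.2
        refine ⟨(T x, V x), ⟨x, rfl⟩, eqP b, ?_, ?_⟩
        · rw [clm_mem_ker, ← hD2app]
          exact clm_mem_ker.1 hb
        · rw [map_add, hL2app]
      · intro hq
        obtain ⟨a, ha, b, hb, hab⟩ := Submodule.mem_sup.1 hq
        obtain ⟨x, rfl⟩ := clm_mem_range.1 ha
        apply Submodule.mem_sup.2
        refine ⟨L2 x, clm_mem_range_self _ _, eqP.symm b, ?_, ?_⟩
        · rw [clm_mem_ker, hD2app, eqP.apply_symm_apply]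
          exact clm_mem_ker.1 hb
        · apply eqP.injective
          rw [map_add, hL2app, eqP.apply_symm_apply]
          have : (T.prod V) x = (T x, V x) := rfl
          rw [← this, hab]
    have hNcl : IsClosed (N : Set (WithLp 2 (K × E))) := by
      rw [hNpre]
      exact h2'.preimage eqP.continuous
    have hkN : LinearMap.ker D2.toLinearMap ≤ N := le_sup_right
    have hD2range : IsClosed (Set.range D2) := by
      have hr : Set.range ⇑D2 =
          ((LinearMap.range (adjoint T).toLinearMap ⊔ LinearMap.range (adjoint V).toLinearMap : Submodule ℂ H) :
            Set H) := by
        ext u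
        simp only [Set.mem_range, SetLike.mem_coe]
        constructor
        · rintro ⟨q, rfl⟩
          rw [hD2app, hDapp]
          exact Submodule.add_mem_sup (clm_mem_range_self _ _)
            (Submodule.smul_mem _ _ (clm_mem_range_self _ _))
        · intro hu
          obtain ⟨a, ha, b, hb, rfl⟩ := Submodule.mem_sup.1 hu
          obtain ⟨y, rfl⟩ := clm_mem_range.1 ha
          obtain ⟨z, rfl⟩ := clm_mem_range.1 hb
          refine ⟨eqP.symm (JK y, (ρ:ℂ)⁻¹ • JE z), ?_⟩
          rw [hD2app, eqP.apply_symm_apply, hDapp]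
          show adjoint T (JK (JK y)) + (ρ:ℂ) • adjoint V (JE ((ρ:ℂ)⁻¹ • JE z)) = _
          rw [hJKinv, map_smul, hJEinv, map_smul, smul_smul, mul_inv_cancel₀ hρC, one_smul]
      rw [hr, aux_rangeTV T V hT hV hker]
      exact Submodule.isClosed_orthogonal _
    have himg := aux_image_closed D2 hD2range N hNcl hkN
    have himgeq : ⇑D2 '' (N : Set (WithLp 2 (K × E))) = Set.range (fun x : H => A x) := by
      ext u
      constructor
      · rintro ⟨q, hq, rfl⟩
        obtain ⟨a, ha, b, hb, rfl⟩ := Submodule.mem_sup.1 hq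
        obtain ⟨x, rfl⟩ := clm_mem_range.1 ha
        refine ⟨x, ?_⟩
        rw [map_add, clm_mem_ker.1 hb, add_zero, hD2app, hL2app, hDL]
      · rintro ⟨x, rfl⟩
        refine ⟨L2 x, Submodule.mem_sup.2
          ⟨L2 x, clm_mem_range_self _ _, 0, Submodule.zero_mem _, add_zero _⟩, ?_⟩
        rw [hD2app, hL2app, hDL]
    rwa [himgeq] at himg
  -- (3) → (1)
  have h31 : IsClosed (Set.range (fun x : H => A x)) →
      ∀ z₀ : E, (∀ x : H, A x = 0 → ⟪JE z₀, V x⟫ = 0) → (smSet JK JE T V ρ z₀).Nonempty := by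
    intro h3 z₀ hz
    rw [aux_min_iff JK hJKsa JE hJEsa T V ρ hpos z₀]
    have hw := (hcond z₀).1 hz
    rw [hkerperp] at hw
    have hcl : IsClosed ((LinearMap.range A.toLinearMap : Submodule ℂ H) : Set H) := by
      rw [← hrangeAsub]; exact h3
    rwa [hcl.submodule_topologicalClosure_eq] at hw
  -- (1) → (3)
  have h13 : (∀ z₀ : E, (∀ x : H, A x = 0 → ⟪JE z₀, V x⟫ = 0) →
      (smSet JK JE T V ρ z₀).Nonempty) → IsClosed (Set.range (fun x : H => A x)) := by
    intro h1
    rw [hrangeAsub]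
    have hle : (LinearMap.range A.toLinearMap).topologicalClosure ≤ LinearMap.range A.toLinearMap := by
      intro w' hw'
      rw [← hkerperp] at hw'
      have hw'2 : w' ∈ (LinearMap.ker T.toLinearMap ⊓ LinearMap.ker V.toLinearMap)ᗮ :=
        Submodule.orthogonal_le hkerTV hw'
      rw [← aux_rangeTV T V hT hV hker] at hw'2
      obtain ⟨a, ha, b, hb, rfl⟩ := Submodule.mem_sup.1 hw'2
      obtain ⟨y, rfl⟩ := clm_mem_range.1 ha
      obtain ⟨z, rfl⟩ := clm_mem_range.1 hb
      obtain ⟨h, hh⟩ := hT (JK y)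
      have hTy : adjoint T y = A h - (ρ:ℂ) • adjoint V (JE (V h)) := by
        rw [hAapp, hh, hJKinv]
        abel
      set z'' : E := z - (ρ:ℂ) • JE (V h) with hz''
      have hsplit : adjoint T y + adjoint V z = A h + adjoint V z'' := by
        rw [hTy, hz'', map_sub, map_smul]
        abel
      have hAh : A h ∈ (LinearMap.ker A.toLinearMap)ᗮ := by
        intro u hu
        rw [← inner_conj_symm, hsym, clm_mem_ker.1 hu, inner_zero_right, map_zero]
      have hv : adjoint V z'' ∈ (LinearMap.ker A.toLinearMap)ᗮ := by
        have h2 : adjoint V z'' = (adjoint T y + adjoint V z) - A h := by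
          rw [hsplit]; abel
        rw [h2]
        exact Submodule.sub_mem _ hw' hAh
      set z₀ : E := (ρ:ℂ)⁻¹ • JE z'' with hz₀
      have hwz : (ρ:ℂ) • adjoint V (JE z₀) = adjoint V z'' := by
        rw [hz₀, map_smul, hJEinv, map_smul, smul_smul, mul_inv_cancel₀ hρC, one_smul]
      have hcondz : ∀ x : H, A x = 0 → ⟪JE z₀, V x⟫ = 0 := by
        apply (hcond z₀).2
        rw [hwz]
        exact hv
      have hne := h1 z₀ hcondz
      have hmem := (aux_min_iff JK hJKsa JE hJEsa T V ρ hpos z₀).1 hne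
      rw [hwz] at hmem
      obtain ⟨x2, hx2⟩ := hmem
      refine ⟨h + x2, ?_⟩
      have hx2' : A x2 = adjoint V z'' := hx2
      rw [ContinuousLinearMap.coe_coe, map_add, hx2', ← hsplit]
    have heq : (LinearMap.range A.toLinearMap).topologicalClosure = LinearMap.range A.toLinearMap :=
      le_antisymm hle (Submodule.le_topologicalClosure _)
    rw [← heq]
    exact Submodule.isClosed_topologicalClosure _
  exact ⟨⟨fun h1 => h32 (h13 h1), fun h2' => h31 (h23 h2')⟩, ⟨h23, h32⟩⟩
end
end

section
/- Assume [Tu,Tu]_K ≥ 0 for every u ∈ ker V, and let z₀ ∈ E. Then the following are equivalent: (1) sp(z₀) ≠ ∅, i.e. the function x ↦ [Tx,Tx]_K attains a minimum on the set {x ∈ H : Vx = z₀}; (2) z₀ ∈ V( ((T^#T)(ker V))^⊥ ), where ⊥ denotes the Hilbert orthogonal complement in H. In this case, sp(z₀) is an affine set parallel to N₀ := ker V ∩ ((T^#T)(ker V))^⊥, i.e. if x₀ ∈ sp(z₀) then sp(z₀) = x₀ + N₀. -/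
open scoped ComplexInnerProductSpace Pointwise

noncomputable section

variable {H K E : Type*}
  [NormedAddCommGroup H] [InnerProductSpace ℂ H] [CompleteSpace H]
  [NormedAddCommGroup K] [InnerProductSpace ℂ K] [CompleteSpace K]
  [NormedAddCommGroup E] [InnerProductSpace ℂ E] [CompleteSpace E]

theorem stmt9
    (JK : K →L[ℂ] K) (hJKsa : IsSelfAdjoint JK) (hJK2 : JK ∘L JK = 1)
    (JE : E →L[ℂ] E) (hJEsa : IsSelfAdjoint JE) (hJE2 : JE ∘L JE = 1)
    (T : H →L[ℂ] K) (V : H →L[ℂ] E)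
    (hT : Function.Surjective T) (hV : Function.Surjective V)
    (hnn : ∀ u : H, V u = 0 → 0 ≤ (⟪JK (T u), T u⟫).re) (z₀ : E) :
    ((spSet JK T V z₀).Nonempty ↔
      z₀ ∈ V ''
        (((Submodule.map (((ContinuousLinearMap.adjoint T) ∘L JK ∘L T : H →L[ℂ] H) : H →ₗ[ℂ] H)
          (LinearMap.ker (V : H →ₗ[ℂ] E)))ᗮ : Set H))) ∧
    (∀ x₀ ∈ spSet JK T V z₀,
      spSet JK T V z₀ = (fun n => x₀ + n) '' ((N0 JK T V : Submodule ℂ H) : Set H)) := by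

  classical
  set A : H →L[ℂ] H := (ContinuousLinearMap.adjoint T) ∘L JK ∘L T with hAdef
  have hq : ∀ x y : H, (⟪A x, y⟫ : ℂ) = ⟪JK (T x), T y⟫ := by
    intro x y
    simp [hAdef, ContinuousLinearMap.adjoint_inner_left]
  have hsymm : ∀ x y : H, (⟪A y, x⟫ : ℂ) = (starRingEnd ℂ) ⟪A x, y⟫ := by
    intro x y
    rw [hq, hq, ← inner_conj_symm]
    congr 1
    rw [← ContinuousLinearMap.adjoint_inner_left, hJKsa.adjoint_eq]
  have expand : ∀ x u : H,
      (⟪JK (T (x + u)), T (x + u)⟫).re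
        = (⟪JK (T x), T x⟫).re + 2 * (⟪A x, u⟫ : ℂ).re + (⟪JK (T u), T u⟫).re := by
    intro x u
    have h1 : (⟪JK (T (x + u)), T (x + u)⟫ : ℂ) = ⟪A (x + u), x + u⟫ := (hq _ _).symm
    have h2 : (⟪A (x + u), x + u⟫ : ℂ)
        = ⟪A x, x⟫ + ⟪A x, u⟫ + ⟪A u, x⟫ + ⟪A u, u⟫ := by
      rw [map_add, inner_add_left, inner_add_right, inner_add_right]
      ring
    have h3 : ((⟪A u, x⟫ : ℂ)).re = ((⟪A x, u⟫ : ℂ)).re := by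
      rw [hsymm]; exact Complex.conj_re _
    rw [h1, h2]
    simp only [Complex.add_re]
    rw [h3]
    simp only [hq]
    ring
  -- characterization of minimizers
  have key : ∀ xt : H, xt ∈ spSet JK T V z₀ ↔
      (V xt = z₀ ∧ ∀ u : H, V u = 0 → (⟪A xt, u⟫ : ℂ) = 0) := by
    intro xt
    constructor
    · rintro ⟨hVxt, hmin⟩
      refine ⟨hVxt, fun u hu => ?_⟩
      by_contra hr
      set r : ℂ := ⟪A xt, u⟫ with hrdef
      set q : ℝ := (⟪JK (T u), T u⟫).re with hqdef
      have hq0 : 0 ≤ q := hnn u hu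
      set t : ℝ := 1 / (q + 1) with htdef
      have ht : 0 < t := by positivity
      set c : ℂ := -(t : ℂ) * (starRingEnd ℂ) r with hcdef
      have hVc : V (xt + c • u) = z₀ := by
        rw [map_add, map_smul, hu, smul_zero, add_zero, hVxt]
      have hle := hmin (xt + c • u) hVc
      rw [expand xt (c • u)] at hle
      have hcu1 : (⟪A xt, c • u⟫ : ℂ) = c * r := by
        rw [inner_smul_right]
      have hconj : ∀ w : ℂ, (starRingEnd ℂ) w * w = (Complex.normSq w : ℂ) := by
        intro w; rw [mul_comm, Complex.mul_conj]
      have hcu2 : (⟪JK (T (c • u)), T (c • u)⟫ : ℂ)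
          = (Complex.normSq c : ℂ) * ⟪JK (T u), T u⟫ := by
        rw [map_smul, map_smul, inner_smul_left, inner_smul_right, ← mul_assoc, hconj]
      have hcr : (c * r).re = -(t * Complex.normSq r) := by
        rw [hcdef]
        have h5 : -(t : ℂ) * (starRingEnd ℂ) r * r = -((t : ℂ) * (Complex.normSq r : ℂ)) := by
          rw [mul_assoc, hconj]
          ring
        rw [h5]
        simp
      have hcq : ((Complex.normSq c : ℂ) * ⟪JK (T u), T u⟫).re
          = Complex.normSq c * q := by
        simp [Complex.mul_re, hqdef]
      have hnc : Complex.normSq c = t ^ 2 * Complex.normSq r := by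
        rw [hcdef, Complex.normSq_mul, Complex.normSq_neg, Complex.normSq_conj,
          Complex.normSq_ofReal]
        ring
      rw [hcu1, hcu2, hcq, hcr, hnc] at hle
      have hnr : 0 < Complex.normSq r := by
        have := Complex.normSq_pos.mpr hr
        exact this
      have htq : t * (q + 1) = 1 := by
        rw [htdef]; field_simp
      nlinarith [mul_pos ht hnr, mul_pos (mul_pos ht ht) hnr, sq_nonneg t]
    · rintro ⟨hVxt, horth⟩
      refine ⟨hVxt, fun x hx => ?_⟩
      have hu : V (x - xt) = 0 := by rw [map_sub, hx, hVxt, sub_self]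
      have hxeq : x = xt + (x - xt) := by abel
      calc (⟪JK (T xt), T xt⟫).re
          ≤ (⟪JK (T xt), T xt⟫).re + 2 * (⟪A xt, x - xt⟫ : ℂ).re
              + (⟪JK (T (x - xt)), T (x - xt)⟫).re := by
            rw [horth _ hu]
            have := hnn _ hu
            simp only [Complex.zero_re]
            linarith
        _ = (⟪JK (T x), T x⟫).re := by rw [← expand xt (x - xt), ← hxeq]
  have hperp : ∀ x : H,
      x ∈ (Submodule.map (A : H →ₗ[ℂ] H) (LinearMap.ker (V : H →ₗ[ℂ] E)))ᗮ ↔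
        ∀ u : H, V u = 0 → (⟪A x, u⟫ : ℂ) = 0 := by
    intro x
    rw [Submodule.mem_orthogonal]
    constructor
    · intro h u hu
      have h0 : (⟪A u, x⟫ : ℂ) = 0 := h (A u) ⟨u, hu, rfl⟩
      rw [hsymm] at h0
      simpa using congrArg (starRingEnd ℂ) h0
    · rintro h w ⟨u, hu, rfl⟩
      rw [ContinuousLinearMap.coe_coe, hsymm, h u hu, map_zero]
  constructor
  · constructor
    · rintro ⟨xt, hxt⟩
      rw [key] at hxt
      exact ⟨xt, (hperp xt).mpr hxt.2, hxt.1⟩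
    · rintro ⟨x, hx, hVx⟩
      exact ⟨x, (key x).mpr ⟨hVx, (hperp x).mp hx⟩⟩
  · intro x₀ hx₀
    obtain ⟨hVx₀, horth₀⟩ := (key x₀).mp hx₀
    ext x
    simp only [Set.mem_image, SetLike.mem_coe]
    constructor
    · intro hx
      obtain ⟨hVx, horth⟩ := (key x).mp hx
      refine ⟨x - x₀, ?_, by abel⟩
      rw [N0, Submodule.mem_inf]
      constructor
      · have hk : V (x - x₀) = 0 := by rw [map_sub, hVx, hVx₀, sub_self]
        exact LinearMap.mem_ker.mpr hk
      · exact (hperp _).mpr (fun u hu => by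
          rw [map_sub, inner_sub_left, horth u hu, horth₀ u hu, sub_self])
    · rintro ⟨n, hn, rfl⟩
      rw [N0, Submodule.mem_inf] at hn
      obtain ⟨hn1, hn2⟩ := hn
      have hn1' : V n = 0 := hn1
      have hn2' : ∀ u : H, V u = 0 → (⟪A n, u⟫ : ℂ) = 0 := (hperp n).mp hn2
      rw [key]
      constructor
      · rw [map_add, hn1', add_zero, hVx₀]
      · intro u hu
        rw [map_add, inner_add_left, horth₀ u hu, hn2' u hu, add_zero]
end
end

section
/- Let N₀ := ker V ∩ ((T^#T)(ker V))^⊥, where ⊥ denotes the Hilbert orthogonal complement in H. Then the isotropic part of T(ker V), namely T(ker V) ∩ {y ∈ K : [y,Tu]_K = 0 for all u ∈ ker V}, equals T(N₀). Moreover, T(ker V) = T(N₀) ∔ T(ker V ∩ N₀^⊥), a direct sum of subspaces that are mutually orthogonal with respect to [·,·]_K. -/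
open scoped ComplexInnerProductSpace Pointwise

noncomputable section

variable {H K E : Type*}
  [NormedAddCommGroup H] [InnerProductSpace ℂ H] [CompleteSpace H]
  [NormedAddCommGroup K] [InnerProductSpace ℂ K] [CompleteSpace K]
  [NormedAddCommGroup E] [InnerProductSpace ℂ E] [CompleteSpace E]

set_option linter.unusedSectionVars false in
lemma innersym (JK : K →L[ℂ] K) (hJKsa : IsSelfAdjoint JK) (a b : K) :
    ⟪JK a, b⟫ = ⟪a, JK b⟫ := by
  conv_lhs => rw [← hJKsa.adjoint_eq]
  exact ContinuousLinearMap.adjoint_inner_left JK b a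

lemma keyinner (JK : K →L[ℂ] K) (hJKsa : IsSelfAdjoint JK)
    (T : H →L[ℂ] K) (x u : H) :
    ⟪((ContinuousLinearMap.adjoint T) ∘L JK ∘L T) u, x⟫ =
      (starRingEnd ℂ) ⟪JK (T x), T u⟫ := by
  rw [ContinuousLinearMap.comp_apply, ContinuousLinearMap.comp_apply,
    ContinuousLinearMap.adjoint_inner_left, ← inner_conj_symm,
    innersym JK hJKsa (T x) (T u)]

lemma mem_N0 (JK : K →L[ℂ] K) (hJKsa : IsSelfAdjoint JK)
    (T : H →L[ℂ] K) (V : H →L[ℂ] E) (x : H) :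
    x ∈ N0 JK T V ↔ V x = 0 ∧ ∀ u : H, V u = 0 → ⟪JK (T x), T u⟫ = 0 := by
  rw [N0, Submodule.mem_inf, LinearMap.mem_ker]
  refine and_congr Iff.rfl ?_
  rw [Submodule.mem_orthogonal]
  constructor
  · intro h u hu
    have h2 := h _ (Submodule.mem_map_of_mem (p := LinearMap.ker (V : H →ₗ[ℂ] E))
      (LinearMap.mem_ker.mpr hu))
    rw [ContinuousLinearMap.coe_coe, keyinner JK hJKsa T x u, map_eq_zero] at h2
    exact h2
  · intro h v hv
    obtain ⟨u, hu, rfl⟩ := Submodule.mem_map.mp hv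
    rw [ContinuousLinearMap.coe_coe, keyinner JK hJKsa T x u,
      h u (LinearMap.mem_ker.mp hu), map_zero]

theorem stmt10
    (JK : K →L[ℂ] K) (hJKsa : IsSelfAdjoint JK) (hJK2 : JK ∘L JK = 1)
    (JE : E →L[ℂ] E) (hJEsa : IsSelfAdjoint JE) (hJE2 : JE ∘L JE = 1)
    (T : H →L[ℂ] K) (V : H →L[ℂ] E)
    (hT : Function.Surjective T) (hV : Function.Surjective V) :
    (T '' (LinearMap.ker (V : H →ₗ[ℂ] E) : Set H) ∩
        {y : K | ∀ u : H, V u = 0 → ⟪JK y, T u⟫ = 0} =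
      T '' ((N0 JK T V : Submodule ℂ H) : Set H)) ∧
    (T '' (LinearMap.ker (V : H →ₗ[ℂ] E) : Set H) =
      T '' ((N0 JK T V : Submodule ℂ H) : Set H) +
        T '' ((LinearMap.ker (V : H →ₗ[ℂ] E) ⊓ (N0 JK T V)ᗮ : Submodule ℂ H) : Set H)) ∧
    (T '' ((N0 JK T V : Submodule ℂ H) : Set H) ∩
        T '' ((LinearMap.ker (V : H →ₗ[ℂ] E) ⊓ (N0 JK T V)ᗮ : Submodule ℂ H) : Set H) = {0}) ∧
    (∀ a ∈ T '' ((N0 JK T V : Submodule ℂ H) : Set H),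
      ∀ b ∈ T '' ((LinearMap.ker (V : H →ₗ[ℂ] E) ⊓ (N0 JK T V)ᗮ : Submodule ℂ H) : Set H),
        ⟪JK a, b⟫ = 0) := by
  have hN0 := mem_N0 JK hJKsa T V
  have hCS : CompleteSpace (N0 JK T V) := by
    have hcl : IsClosed ((N0 JK T V : Submodule ℂ H) : Set H) := by
      rw [N0, Submodule.coe_inf]
      exact (ContinuousLinearMap.isClosed_ker V).inter (Submodule.isClosed_orthogonal _)
    exact hcl.completeSpace_coe
  refine ⟨?_, ?_, ?_, ?_⟩
  · ext y
    constructor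
    · rintro ⟨⟨x, hx, rfl⟩, hy⟩
      exact ⟨x, (hN0 x).mpr ⟨hx, fun u hu => hy u hu⟩, rfl⟩
    · rintro ⟨x, hx, rfl⟩
      obtain ⟨hx1, hx2⟩ := (hN0 x).mp hx
      exact ⟨⟨x, hx1, rfl⟩, hx2⟩
  · ext y
    rw [Set.mem_add]
    constructor
    · rintro ⟨x, hx, rfl⟩
      obtain ⟨p, hp, q, hq, hpq⟩ := (N0 JK T V).exists_add_mem_mem_orthogonal x
      have hxk : V x = 0 := hx
      have hp' : V p = 0 := ((hN0 p).mp hp).1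
      have hq' : V q = 0 := by
        have : V (p + q) = 0 := by rw [← hpq]; exact hxk
        rw [map_add, hp', zero_add] at this
        exact this
      refine ⟨T p, ⟨p, hp, rfl⟩, T q,
        ⟨q, Submodule.mem_inf.mpr ⟨LinearMap.mem_ker.mpr hq', hq⟩, rfl⟩, ?_⟩
      rw [← map_add, ← hpq]
    · rintro ⟨a, ⟨p, hp, rfl⟩, b, ⟨q, hq, rfl⟩, rfl⟩
      refine ⟨p + q, ?_, map_add T p q⟩
      have hp' : V p = 0 := ((hN0 p).mp hp).1
      have hq' : V q = 0 := LinearMap.mem_ker.mp (Submodule.mem_inf.mp hq).1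
      show V (p + q) = 0
      rw [map_add, hp', hq', zero_add]
  · ext y
    simp only [Set.mem_inter_iff, Set.mem_singleton_iff]
    constructor
    · rintro ⟨⟨p, hp, rfl⟩, ⟨q, hq, hqe⟩⟩
      obtain ⟨hq1, hq2⟩ := Submodule.mem_inf.mp hq
      have hq0 : q ∈ N0 JK T V := by
        refine (hN0 q).mpr ⟨LinearMap.mem_ker.mp hq1, fun u hu => ?_⟩
        rw [hqe]
        exact ((hN0 p).mp hp).2 u hu
      have hq00 : q = 0 := by
        rw [← inner_self_eq_zero (𝕜 := ℂ)]
        exact (Submodule.mem_orthogonal _ q).mp hq2 q hq0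
      rw [← hqe, hq00, map_zero]
    · rintro rfl
      exact ⟨⟨0, Submodule.zero_mem _, map_zero T⟩, ⟨0, Submodule.zero_mem _, map_zero T⟩⟩
  · rintro a ⟨p, hp, rfl⟩ b ⟨q, hq, rfl⟩
    exact ((hN0 p).mp hp).2 q (LinearMap.mem_ker.mp (Submodule.mem_inf.mp hq).1)
end
end

section
/- Let N₀ := ker V ∩ ((T^#T)(ker V))^⊥, where ⊥ denotes the Hilbert orthogonal complement in H, and let T(ker V)^[⊥] := {y ∈ K : [y,Tu]_K = 0 for all u ∈ ker V}. Then T(ker V) + T(ker V)^[⊥] is a closed subspace of K (i.e. T(ker V) is pseudo-regular) if and only if ker V + ((T^#T)(ker V))^⊥ is a closed subspace of H. In this case, the subspace M := T(ker V ∩ N₀^⊥) is regular in K, i.e. M + {y ∈ K : [y,m]_K = 0 for all m ∈ M} = K. -/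
open scoped ComplexInnerProductSpace Pointwise

noncomputable section

variable {H K E : Type*}
  [NormedAddCommGroup H] [InnerProductSpace ℂ H] [CompleteSpace H]
  [NormedAddCommGroup K] [InnerProductSpace ℂ K] [CompleteSpace K]
  [NormedAddCommGroup E] [InnerProductSpace ℂ E] [CompleteSpace E]

/-- `((T^#T)(ker V))^⊥`, the Hilbert orthogonal complement in `H` of the image of
`ker V` under `T^#T`. -/
def TTkerVperp (JK : K →L[ℂ] K) (T : H →L[ℂ] K) (V : H →L[ℂ] E) : Submodule ℂ H :=
  (Submodule.map (((ContinuousLinearMap.adjoint T) ∘L JK ∘L T : H →L[ℂ] H) : H →ₗ[ℂ] H)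
    (LinearMap.ker (V : H →ₗ[ℂ] E)))ᗮ

open ContinuousLinearMap Submodule Function

section Toolkit
variable {F G : Type*}
  [NormedAddCommGroup F] [InnerProductSpace ℂ F] [CompleteSpace F]
  [NormedAddCommGroup G] [InnerProductSpace ℂ G] [CompleteSpace G]

lemma adj_bddBelow (f : F →L[ℂ] G) (hf : Function.Surjective f) :
    ∃ C : ℝ, 0 < C ∧ ∀ y : G, ‖y‖ ≤ C * ‖adjoint f y‖ := by
  obtain ⟨C, hC, h⟩ := f.exists_preimage_norm_le hf
  refine ⟨C, hC, fun y => ?_⟩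
  obtain ⟨x, hx, hnx⟩ := h y
  by_cases hy : y = 0
  · simp [hy]
  · have hny : 0 < ‖y‖ := norm_pos_iff.mpr hy
    have h0 : ⟪y, f x⟫ = (‖y‖ : ℂ) ^ 2 := by
      rw [hx]; exact inner_self_eq_norm_sq_to_K y
    have h1 : ‖y‖ ^ 2 ≤ (C * ‖adjoint f y‖) * ‖y‖ := by
      calc ‖y‖ ^ 2 = ‖⟪y, f x⟫‖ := by
            rw [h0]; simp [norm_pow]
        _ = ‖⟪adjoint f y, x⟫‖ := by rw [adjoint_inner_left]
        _ ≤ ‖adjoint f y‖ * ‖x‖ := norm_inner_le_norm _ _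
        _ ≤ ‖adjoint f y‖ * (C * ‖y‖) := by
            gcongr
        _ = (C * ‖adjoint f y‖) * ‖y‖ := by ring
    have h2 : ‖y‖ * ‖y‖ ≤ (C * ‖adjoint f y‖) * ‖y‖ := by nlinarith
    exact le_of_mul_le_mul_right h2 hny

lemma range_adjoint_of_surj (f : F →L[ℂ] G) (hf : Function.Surjective f) :
    (LinearMap.range ((adjoint f : G →L[ℂ] F) : G →ₗ[ℂ] F) : Submodule ℂ F) = (LinearMap.ker (f : F →ₗ[ℂ] G))ᗮ := by
  obtain ⟨C, hC, hb⟩ := adj_bddBelow f hf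
  have hal : AntilipschitzWith (⟨C, hC.le⟩ : NNReal) (adjoint f) :=
    (adjoint f).antilipschitz_of_bound (fun y => hb y)
  have hcl : IsClosed (LinearMap.range ((adjoint f : G →L[ℂ] F) : G →ₗ[ℂ] F) : Set F) := by
    have : (LinearMap.range ((adjoint f : G →L[ℂ] F) : G →ₗ[ℂ] F) : Set F) = Set.range (adjoint f) := by
      ext x; simp [LinearMap.mem_range, Set.mem_range]
    rw [this]
    exact hal.isClosed_range (adjoint f).uniformContinuous
  have h2 : (LinearMap.range ((adjoint f : G →L[ℂ] F) : G →ₗ[ℂ] F))ᗮ = LinearMap.ker (f : F →ₗ[ℂ] G) := by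
    ext x
    simp only [Submodule.mem_orthogonal, LinearMap.mem_range, LinearMap.mem_ker]
    constructor
    · intro h
      have h3 : ∀ y : G, ⟪y, f x⟫ = 0 := fun y => by
        rw [← adjoint_inner_left]; exact h _ ⟨y, rfl⟩
      have := h3 (f x)
      exact inner_self_eq_zero.mp this
    · rintro h u ⟨y, rfl⟩
      simp only [ContinuousLinearMap.coe_coe] at h ⊢
      rw [adjoint_inner_left, h, inner_zero_right]
  have h1 : (LinearMap.range ((adjoint f : G →L[ℂ] F) : G →ₗ[ℂ] F))ᗮᗮ = LinearMap.range ((adjoint f : G →L[ℂ] F) : G →ₗ[ℂ] F) := by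
    rw [Submodule.orthogonal_orthogonal_eq_closure]
    exact le_antisymm ((LinearMap.range ((adjoint f : G →L[ℂ] F) : G →ₗ[ℂ] F)).topologicalClosure_minimal le_rfl hcl)
      (Submodule.le_topologicalClosure _)
  rw [← h2, h1]

end Toolkit

section Dual
variable {F : Type*} [NormedAddCommGroup F] [InnerProductSpace ℂ F] [CompleteSpace F]

lemma orth_sup_eq (X Y : Submodule ℂ F)
    (hX : IsClosed (X : Set F)) (hY : IsClosed (Y : Set F))
    (hsum : IsClosed ((X ⊔ Y : Submodule ℂ F) : Set F)) :
    Xᗮ ⊔ Yᗮ = (X ⊓ Y)ᗮ := by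
  refine le_antisymm (sup_le (Submodule.orthogonal_le inf_le_left)
    (Submodule.orthogonal_le inf_le_right)) ?_
  intro u hu
  set Z : Submodule ℂ F := X ⊔ Y with hZdef
  haveI : CompleteSpace Z := hsum.completeSpace_coe
  haveI : CompleteSpace X := hX.completeSpace_coe
  haveI : CompleteSpace Y := hY.completeSpace_coe
  -- the addition map
  let φ0 : (X × Y) →L[ℂ] F :=
    X.subtypeL.comp (ContinuousLinearMap.fst ℂ X Y) +
      Y.subtypeL.comp (ContinuousLinearMap.snd ℂ X Y)
  have hφ0 : ∀ p : X × Y, φ0 p = (p.1 : F) + (p.2 : F) := fun p => rfl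
  have hmemZ : ∀ p : X × Y, φ0 p ∈ Z := fun p => by
    rw [hφ0]
    exact add_mem (Submodule.mem_sup_left p.1.2) (Submodule.mem_sup_right p.2.2)
  let φ : (X × Y) →L[ℂ] Z := φ0.codRestrict Z hmemZ
  have hφsurj : Function.Surjective φ := by
    rintro ⟨z, hz⟩
    obtain ⟨x, hx, y, hy, hxy⟩ := Submodule.mem_sup.mp hz
    exact ⟨(⟨x, hx⟩, ⟨y, hy⟩), Subtype.ext (by simpa [φ, hφ0] using hxy)⟩
  obtain ⟨C, hC, hsel⟩ := φ.exists_preimage_norm_le hφsurj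
  -- well-definedness of the X-component pairing against u
  have key : ∀ x₁ ∈ X, ∀ x₂ ∈ X, ∀ y₁ ∈ Y, ∀ y₂ ∈ Y, x₁ + y₁ = x₂ + y₂ →
      (⟪u, x₁⟫ : ℂ) = ⟪u, x₂⟫ := by
    intro x₁ hx₁ x₂ hx₂ y₁ hy₁ y₂ hy₂ heq
    have hmem : x₁ - x₂ ∈ X ⊓ Y := by
      constructor
      · exact sub_mem hx₁ hx₂
      · have : x₁ - x₂ = y₂ - y₁ := by rw [sub_eq_sub_iff_add_eq_add, heq, add_comm]
        rw [this]; exact sub_mem hy₂ hy₁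
    have h0 : ⟪u, x₁ - x₂⟫ = (0 : ℂ) :=
      inner_eq_zero_symm.mp (hu _ hmem)
    rw [inner_sub_right] at h0
    exact sub_eq_zero.mp h0
  -- decomposition with chosen bounded preimage
  let P : F →L[ℂ] Z := orthogonalProjection Z
  let dec : F → (X × Y) := fun h => Classical.choose (hsel (P h))
  have hdec : ∀ h : F, ((dec h).1 : F) + ((dec h).2 : F) = ((P h : Z) : F) ∧
      ‖dec h‖ ≤ C * ‖((P h : Z) : F)‖ := by
    intro h
    obtain ⟨h1, h2⟩ := Classical.choose_spec (hsel (P h))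
    constructor
    · exact congrArg Subtype.val h1
    · simpa [dec] using h2
  set val : F → ℂ := fun h => ⟪u, ((dec h).1 : F)⟫ with hval
  have hval_eq : ∀ (h : F) (x : F), x ∈ X → (∃ y ∈ Y, x + y = ((P h : Z) : F)) →
      val h = ⟪u, x⟫ := by
    intro h x hx ⟨y, hy, hxy⟩
    exact key _ (dec h).1.2 _ hx _ (dec h).2.2 _ hy (by rw [(hdec h).1, ← hxy])
  have hPadd : ∀ h₁ h₂ : F, ((P (h₁ + h₂) : Z) : F) = ((P h₁ : Z) : F) + ((P h₂ : Z) : F) := by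
    intro h₁ h₂; rw [map_add]; rfl
  have hPsmul : ∀ (c : ℂ) (h : F), ((P (c • h) : Z) : F) = c • ((P h : Z) : F) := by
    intro c h; rw [map_smul]; rfl
  have hlin_add : ∀ h₁ h₂ : F, val (h₁ + h₂) = val h₁ + val h₂ := by
    intro h₁ h₂
    have := hval_eq (h₁ + h₂) (((dec h₁).1 : F) + ((dec h₂).1 : F))
      (add_mem (dec h₁).1.2 (dec h₂).1.2)
      ⟨((dec h₁).2 : F) + ((dec h₂).2 : F), add_mem (dec h₁).2.2 (dec h₂).2.2, by
        rw [hPadd, ← (hdec h₁).1, ← (hdec h₂).1]; abel⟩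
    rw [this, inner_add_right]
  have hlin_smul : ∀ (c : ℂ) (h : F), val (c • h) = c * val h := by
    intro c h
    have := hval_eq (c • h) (c • ((dec h).1 : F))
      (Submodule.smul_mem _ _ (dec h).1.2)
      ⟨c • ((dec h).2 : F), Submodule.smul_mem _ _ (dec h).2.2, by
        rw [hPsmul, ← (hdec h).1, smul_add]⟩
    rw [this, inner_smul_right]
  let F0 : F →ₗ[ℂ] ℂ :=
    { toFun := val
      map_add' := hlin_add
      map_smul' := hlin_smul }
  have hbound : ∀ h : F, ‖F0 h‖ ≤ (‖u‖ * C) * ‖h‖ := by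
    intro h
    have h1 : ‖val h‖ ≤ ‖u‖ * ‖((dec h).1 : F)‖ := norm_inner_le_norm _ _
    have h2 : ‖((dec h).1 : F)‖ ≤ ‖dec h‖ := by
      have : ‖((dec h).1 : F)‖ = ‖(dec h).1‖ := rfl
      rw [this]; exact norm_fst_le (dec h)
    have h3 : ‖((P h : Z) : F)‖ ≤ ‖h‖ := by
      have h4 : ‖(P h : Z)‖ ≤ ‖P‖ * ‖h‖ := P.le_opNorm h
      have h5 : ‖P‖ ≤ 1 := orthogonalProjection_norm_le Z
      have h6 : ‖((P h : Z) : F)‖ = ‖(P h : Z)‖ := rfl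
      nlinarith [norm_nonneg h]
    calc ‖F0 h‖ ≤ ‖u‖ * ‖((dec h).1 : F)‖ := h1
      _ ≤ ‖u‖ * (C * ‖h‖) := by
          have hd := (hdec h).2
          have hu0 := norm_nonneg u
          have hx0 := norm_nonneg ((dec h).1 : F)
          nlinarith [hC.le, mul_le_mul_of_nonneg_left h3 hC.le]
      _ = (‖u‖ * C) * ‖h‖ := by ring
  let F1 : F →L[ℂ] ℂ := F0.mkContinuous (‖u‖ * C) hbound
  set v : F := (InnerProductSpace.toDual ℂ F).symm F1 with hv
  have hv_eq : ∀ h : F, ⟪v, h⟫ = val h := by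
    intro h
    exact InnerProductSpace.toDual_symm_apply
  -- v ∈ Yᗮ
  have hvY : v ∈ Yᗮ := by
    rw [Submodule.mem_orthogonal]
    intro y hy
    rw [← inner_eq_zero_symm, hv_eq]
    have hyZ : y ∈ Z := Submodule.mem_sup_right hy
    have hPy : ((P y : Z) : F) = y := Submodule.starProjection_eq_self_iff (K := Z).mpr hyZ
    have := hval_eq y 0 (zero_mem X) ⟨y, hy, by rw [hPy, zero_add]⟩
    rw [this, inner_zero_right]
  -- u - v ∈ Xᗮ
  have huvX : u - v ∈ Xᗮ := by
    rw [Submodule.mem_orthogonal]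
    intro x hx
    rw [← inner_eq_zero_symm, inner_sub_left, hv_eq]
    have hxZ : x ∈ Z := Submodule.mem_sup_left hx
    have hPx : ((P x : Z) : F) = x := Submodule.starProjection_eq_self_iff (K := Z).mpr hxZ
    have := hval_eq x x hx ⟨0, zero_mem Y, by rw [hPx, add_zero]⟩
    rw [this, sub_self]
  exact Submodule.mem_sup.mpr ⟨u - v, huvX, v, hvY, sub_add_cancel u v⟩

/-- The main Hilbert-space geometry lemma. -/
lemma mainHilbert (A : F →L[ℂ] F)
    (hsa : ∀ x y : F, ⟪A x, y⟫ = ⟪x, A y⟫)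
    (hra : (LinearMap.range (A : F →ₗ[ℂ] F) : Submodule ℂ F) = (LinearMap.ker (A : F →ₗ[ℂ] F))ᗮ)
    (W : Submodule ℂ F) (hWc : IsClosed (W : Set F))
    (hyp : IsClosed ((W ⊔ (Submodule.map (A : F →ₗ[ℂ] F) W)ᗮ : Submodule ℂ F) : Set F))
    (x₀ : F) :
    ∃ n ∈ W ⊓ (W ⊓ (Submodule.map (A : F →ₗ[ℂ] F) W)ᗮ)ᗮ,
      x₀ - n ∈ (Submodule.map (A : F →ₗ[ℂ] F) (W ⊓ (W ⊓ (Submodule.map (A : F →ₗ[ℂ] F) W)ᗮ)ᗮ))ᗮ := by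
  set Am : F →ₗ[ℂ] F := (A : F →ₗ[ℂ] F) with hAm
  set Q : Submodule ℂ F := (Submodule.map Am W)ᗮ with hQ
  set N₀ : Submodule ℂ F := W ⊓ Q with hN₀
  set N : Submodule ℂ F := W ⊓ N₀ᗮ with hN
  set Y : Submodule ℂ F := W ⊔ Q with hY
  -- basic facts
  have memQ' : ∀ x : F, x ∈ Q ↔ A x ∈ Wᗮ := by
    intro x
    rw [hQ, Submodule.mem_orthogonal, Submodule.mem_orthogonal]
    constructor
    · intro h w hw
      rw [← hsa]
      exact h (A w) ⟨w, hw, rfl⟩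
    · rintro h v ⟨w, hw, rfl⟩
      rw [hAm]; show (⟪A w, x⟫ : ℂ) = 0
      rw [hsa]; exact h w hw
  have memQu : ∀ x ∈ Q, ∀ w ∈ W, (⟪A w, x⟫ : ℂ) = 0 := by
    intro x hx w hw
    rw [hsa]
    exact (Submodule.mem_orthogonal _ _).mp ((memQ' x).mp hx) w hw
  have hrange_closed : IsClosed ((LinearMap.range Am : Submodule ℂ F) : Set F) := by
    rw [hra]; exact Submodule.isClosed_orthogonal _
  have hQc : IsClosed (Q : Set F) := Submodule.isClosed_orthogonal _
  have hkerAc : IsClosed ((LinearMap.ker Am : Submodule ℂ F) : Set F) := by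
    have : (LinearMap.ker Am : Set F) = (A : F → F) ⁻¹' {0} := rfl
    rw [this]
    exact IsClosed.preimage A.continuous isClosed_singleton
  -- Step K3 : Qᗮ ≤ map Am W ⊔ Yᗮ
  have hK3 : Qᗮ ≤ Submodule.map Am W ⊔ Yᗮ := by
    intro u hu
    -- u ∈ range A
    have hQperp : Qᗮ = (Submodule.map Am W).topologicalClosure := by
      rw [hQ]; exact Submodule.orthogonal_orthogonal_eq_closure _
    have hmapleq : (Submodule.map Am W).topologicalClosure ≤ LinearMap.range Am :=
      Submodule.topologicalClosure_minimal _ (LinearMap.map_le_range) hrange_closed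
    have huRange : u ∈ LinearMap.range Am := hmapleq (hQperp ▸ hu)
    obtain ⟨x, hx⟩ := huRange
    -- x ∈ Y
    have hxY : x ∈ Y := by
      have hYcc : Yᗮᗮ = Y := by
        rw [Submodule.orthogonal_orthogonal_eq_closure]
        exact le_antisymm (Y.topologicalClosure_minimal le_rfl hyp)
          (Submodule.le_topologicalClosure _)
      rw [← hYcc, Submodule.mem_orthogonal]
      intro s hs
      -- s ∈ Qᗮ hence s = A q̃ with q̃ ∈ Q
      have hsQperp : s ∈ Qᗮ := Submodule.orthogonal_le le_sup_right hs
      have hsW : s ∈ Wᗮ := Submodule.orthogonal_le le_sup_left hs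
      have hsRange : s ∈ LinearMap.range Am := hmapleq (hQperp ▸ hsQperp)
      obtain ⟨qt, hqt⟩ := hsRange
      have hqtQ : qt ∈ Q := (memQ' qt).mpr (by rw [hAm] at hqt; rw [show A qt = s from hqt]; exact hsW)
      have : (⟪s, x⟫ : ℂ) = ⟪qt, u⟫ := by
        rw [← hqt, hAm]
        show (⟪A qt, x⟫ : ℂ) = ⟪qt, u⟫
        rw [hsa, show A x = u from hx]
      rw [this]
      exact (Submodule.mem_orthogonal _ _).mp hu qt hqtQ
    -- decompose x = w + q
    obtain ⟨w, hw, q, hq, hwq⟩ := Submodule.mem_sup.mp hxY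
    -- kernel part of w
    haveI : CompleteSpace (LinearMap.ker Am : Submodule ℂ F) := hkerAc.completeSpace_coe
    set kw : F := (orthogonalProjection (LinearMap.ker Am) w : F) with hkw
    have hkw_mem : kw ∈ LinearMap.ker Am := SetLike.coe_mem _
    have hAkw : A kw = 0 := hkw_mem
    have hker_le_Q : (LinearMap.ker Am : Submodule ℂ F) ≤ Q := by
      intro k hk
      refine (memQ' k).mpr ?_
      rw [show A k = 0 from hk]
      exact Submodule.zero_mem _
    set w₁ : F := w - kw with hw₁
    set q'' : F := x - w₁ with hq''
    have hq''Q : q'' ∈ Q := by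
      have : q'' = q + kw := by rw [hq'', hw₁, ← hwq]; abel
      rw [this]
      exact Submodule.add_mem _ hq (hker_le_Q hkw_mem)
    -- A q'' ∈ Yᗮ
    have hAq''S : A q'' ∈ Yᗮ := by
      rw [Submodule.mem_orthogonal]
      intro y hy
      obtain ⟨wy, hwy, qy, hqy, hwqy⟩ := Submodule.mem_sup.mp hy
      rw [← hwqy, inner_add_left]
      have e1 : (⟪wy, A q''⟫ : ℂ) = 0 :=
        (Submodule.mem_orthogonal _ _).mp ((memQ' q'').mp hq''Q) wy hwy
      have e2 : (⟪qy, A q''⟫ : ℂ) = 0 := by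
        rw [← hsa]
        have : (⟪A qy, q''⟫ : ℂ) = ⟪A qy, x⟫ - ⟪A qy, w₁⟫ := by
          rw [hq'', inner_sub_right]
        rw [this]
        have e3 : (⟪A qy, x⟫ : ℂ) = 0 := by
          rw [hsa, show A x = u from hx]
          exact (Submodule.mem_orthogonal _ _).mp hu qy hqy
        have e4 : (⟪A qy, w₁⟫ : ℂ) = 0 := by
          rw [hw₁, inner_sub_right]
          have e5 : (⟪A qy, w⟫ : ℂ) = 0 := by
            rw [← inner_eq_zero_symm]
            exact (Submodule.mem_orthogonal _ _).mp ((memQ' qy).mp hqy) w hw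
          have e6 : (⟪A qy, kw⟫ : ℂ) = 0 := by
            rw [hsa, hAkw, inner_zero_right]
          rw [e5, e6, sub_zero]
        rw [e3, e4, sub_zero]
      rw [e1, e2, add_zero]
    -- conclude
    have hu_eq : u = A w + A q'' := by
      have hxsplit : x = w₁ + q'' := by rw [hq'']; abel
      rw [← (show A x = u from hx), hxsplit, map_add, hw₁, map_sub, hAkw, sub_zero]
    rw [hu_eq]
    exact Submodule.add_mem _ (Submodule.mem_sup_left ⟨w, hw, rfl⟩)
      (Submodule.mem_sup_right hAq''S)
  -- Step K4 : map Am W ⊔ Wᗮ = Qᗮ ⊔ Wᗮ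
  have hK4 : Submodule.map Am W ⊔ Wᗮ = Qᗮ ⊔ Wᗮ := by
    refine le_antisymm (sup_le (le_trans ?_ le_sup_left) le_sup_right)
      (sup_le (le_trans hK3 ?_) le_sup_right)
    · rw [hQ]; exact Submodule.le_orthogonal_orthogonal _
    · exact sup_le_sup le_rfl (Submodule.orthogonal_le le_sup_left)
  -- Step K5 : Qᗮ ⊔ Wᗮ is closed (duality lemma)
  have hK5 : IsClosed ((Qᗮ ⊔ Wᗮ : Submodule ℂ F) : Set F) := by
    have := orth_sup_eq Q W hQc hWc (by rw [sup_comm]; exact hyp)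
    rw [this]
    exact Submodule.isClosed_orthogonal _
  -- R := (Qᗮ ⊔ Wᗮ) ⊓ W equals N
  set R : Submodule ℂ F := (Qᗮ ⊔ Wᗮ) ⊓ W with hR
  have hRc : IsClosed (R : Set F) := by
    rw [hR]
    rw [Submodule.coe_inf]
    exact hK5.inter hWc
  have hRN : R ≤ N := by
    intro r hrm
    have hr1 : r ∈ (Qᗮ ⊔ Wᗮ : Submodule ℂ F) := hrm.1
    have hr2 : r ∈ W := hrm.2
    have hr1' : r ∈ Submodule.map Am W ⊔ Wᗮ := hK4 ▸ hr1
    obtain ⟨m, hm, v, hv, hmv⟩ := Submodule.mem_sup.mp hr1'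
    obtain ⟨w, hw, hwm⟩ := hm
    show r ∈ W ⊓ N₀ᗮ
    refine ⟨hr2, (Submodule.mem_orthogonal _ _).mpr ?_⟩
    intro n₀ hn₀m
    have hn₀W : n₀ ∈ W := hn₀m.1
    have hn₀Q : n₀ ∈ Q := hn₀m.2
    rw [← hmv, inner_add_right, ← hwm]
    have e1 : (⟪n₀, Am w⟫ : ℂ) = 0 := by
      show (⟪n₀, A w⟫ : ℂ) = 0
      rw [← hsa]
      rw [← inner_eq_zero_symm]
      exact (Submodule.mem_orthogonal _ _).mp ((memQ' n₀).mp hn₀Q) w hw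
    have e2 : (⟪n₀, v⟫ : ℂ) = 0 := (Submodule.mem_orthogonal _ _).mp hv n₀ hn₀W
    rw [e1, e2, add_zero]
  have hNR : N ≤ R := by
    intro n hn
    haveI : CompleteSpace R := hRc.completeSpace_coe
    set r : F := (orthogonalProjection R n : F) with hr
    have hrR : r ∈ R := SetLike.coe_mem _
    set d : F := n - r with hd
    have hdperp : d ∈ Rᗮ := Submodule.sub_starProjection_mem_orthogonal (K := R) n
    have hdN : d ∈ N := Submodule.sub_mem _ hn (hRN hrR)
    have hdW : d ∈ W := hdN.1
    -- d ∈ Q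
    have hdQ : d ∈ Q := by
      refine (memQ' d).mpr ?_
      rw [Submodule.mem_orthogonal]
      intro w hw
      -- ⟪w, A d⟫ = ⟪A w, d⟫ and split A w along W
      rw [← hsa]
      haveI : CompleteSpace W := hWc.completeSpace_coe
      set p : F := (orthogonalProjection W (A w) : F) with hp
      have hpW : p ∈ W := SetLike.coe_mem _
      have hpperp : A w - p ∈ Wᗮ := Submodule.sub_starProjection_mem_orthogonal (K := W) (A w)
      have hpR : p ∈ R := by
        refine ⟨hK4 ▸ ?_, hpW⟩
        have : p = A w - (A w - p) := by abel
        rw [this]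
        exact Submodule.sub_mem _ (Submodule.mem_sup_left ⟨w, hw, rfl⟩)
          (Submodule.mem_sup_right hpperp)
      have : (⟪A w, d⟫ : ℂ) = ⟪p, d⟫ + ⟪A w - p, d⟫ := by
        rw [← inner_add_left]; norm_num
      rw [this]
      have e1 : (⟪p, d⟫ : ℂ) = 0 := (Submodule.mem_orthogonal _ _).mp hdperp p hpR
      have e2 : (⟪A w - p, d⟫ : ℂ) = 0 := by
        rw [← inner_eq_zero_symm]
        exact (Submodule.mem_orthogonal _ _).mp hpperp d hdW
      rw [e1, e2, add_zero]
    -- d = 0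
    have hdzero : d = 0 := by
      have hdN₀ : d ∈ N₀ := ⟨hdW, hdQ⟩
      have : (⟪d, d⟫ : ℂ) = 0 := (Submodule.mem_orthogonal _ _).mp hdN.2 d hdN₀
      exact inner_self_eq_zero.mp this
    have : n = r := sub_eq_zero.mp hdzero
    rw [this]; exact hrR
  -- Step 3 : the final construction
  have hNc : IsClosed (N : Set F) := by
    rw [hN, Submodule.coe_inf]
    exact hWc.inter (Submodule.isClosed_orthogonal _)
  have hN₀c : IsClosed (N₀ : Set F) := by
    rw [hN₀, Submodule.coe_inf]
    exact hWc.inter hQc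
  haveI : CompleteSpace N := hNc.completeSpace_coe
  haveI : CompleteSpace N₀ := hN₀c.completeSpace_coe
  set ξ : F := (orthogonalProjection N (A x₀) : F) with hξ
  have hξN : ξ ∈ N := SetLike.coe_mem _
  have hξperp : A x₀ - ξ ∈ Nᗮ := Submodule.sub_starProjection_mem_orthogonal (K := N) (A x₀)
  -- ξ ∈ R, so ξ = A w + v
  obtain ⟨m, hm, v, hv, hmv⟩ := Submodule.mem_sup.mp ((hK4 ▸ (hNR hξN).1 :
    ξ ∈ Submodule.map Am W ⊔ Wᗮ))
  obtain ⟨w, hw, hwm⟩ := hm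
  -- decompose w = n₀ + n
  set n₀ : F := (orthogonalProjection N₀ w : F) with hn₀def
  have hn₀mem : n₀ ∈ N₀ := SetLike.coe_mem _
  set n : F := w - n₀ with hndef
  have hnN : n ∈ N := by
    refine ⟨Submodule.sub_mem _ hw hn₀mem.1, ?_⟩
    exact Submodule.sub_starProjection_mem_orthogonal (K := N₀) w
  refine ⟨n, hnN, ?_⟩
  rw [Submodule.mem_orthogonal]
  rintro m' ⟨n', hn', hn'm⟩
  rw [← hn'm]
  show (⟪A n', x₀ - n⟫ : ℂ) = 0
  have hAn₀ : A n₀ ∈ Wᗮ := (memQ' n₀).mp hn₀mem.2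
  have c1 : (⟪A n', x₀⟫ : ℂ) = ⟪n', ξ⟫ := by
    rw [hsa]
    have : (⟪n', A x₀⟫ : ℂ) = ⟪n', ξ⟫ + ⟪n', A x₀ - ξ⟫ := by
      rw [← inner_add_right]; norm_num
    rw [this, (Submodule.mem_orthogonal _ _).mp hξperp n' hn', add_zero]
  have c2 : (⟪A n', n⟫ : ℂ) = ⟪n', ξ⟫ := by
    rw [hsa, hndef]
    have e1 : (⟪n', A n₀⟫ : ℂ) = 0 :=
      (Submodule.mem_orthogonal _ _).mp hAn₀ n' hn'.1
    have e2 : (⟪n', A w⟫ : ℂ) = ⟪n', ξ⟫ := by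
      have hAw : A w = ξ - v := by
        rw [← hmv, ← hwm]; show A w = Am w + v - v; rw [add_sub_cancel_right]; rfl
      rw [hAw, inner_sub_right,
        (Submodule.mem_orthogonal _ _).mp hv n' hn'.1, sub_zero]
    have : A n = A w - A n₀ := by rw [hndef, map_sub]
    rw [show A (w - n₀) = A w - A n₀ from map_sub A w n₀, inner_sub_right, e1, e2, sub_zero]
  rw [inner_sub_right, c1, c2, sub_self]

end Dual

theorem stmt12
    (JK : K →L[ℂ] K) (hJKsa : IsSelfAdjoint JK) (hJK2 : JK ∘L JK = 1)
    (JE : E →L[ℂ] E) (hJEsa : IsSelfAdjoint JE) (hJE2 : JE ∘L JE = 1)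
    (T : H →L[ℂ] K) (V : H →L[ℂ] E)
    (hT : Function.Surjective T) (hV : Function.Surjective V) :
    (IsClosed (T '' (LinearMap.ker (V : H →ₗ[ℂ] E) : Set H) +
        {y : K | ∀ u : H, V u = 0 → ⟪JK y, T u⟫ = 0}) ↔
      IsClosed ((LinearMap.ker (V : H →ₗ[ℂ] E) : Set H) + (TTkerVperp JK T V : Set H))) ∧
    (IsClosed (T '' (LinearMap.ker (V : H →ₗ[ℂ] E) : Set H) +
        {y : K | ∀ u : H, V u = 0 → ⟪JK y, T u⟫ = 0}) →
      T '' ((LinearMap.ker (V : H →ₗ[ℂ] E) ⊓ (N0 JK T V)ᗮ : Submodule ℂ H) : Set H) +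
        {y : K | ∀ m : K,
          m ∈ T '' ((LinearMap.ker (V : H →ₗ[ℂ] E) ⊓ (N0 JK T V)ᗮ : Submodule ℂ H) : Set H) →
          ⟪JK y, m⟫ = 0} = Set.univ) := by
    classical
  set A : H →L[ℂ] H := (ContinuousLinearMap.adjoint T) ∘L JK ∘L T with hA
  set Am : H →ₗ[ℂ] H := (A : H →ₗ[ℂ] H) with hAm
  set W : Submodule ℂ H := LinearMap.ker (V : H →ₗ[ℂ] E) with hW
  set Q : Submodule ℂ H := (Submodule.map Am W)ᗮ with hQdef
  have hQ_eq : TTkerVperp JK T V = Q := rfl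
  have hN0_eq : N0 JK T V = W ⊓ Q := rfl
  -- JK is symmetric
  have hJK : ∀ x y : K, (⟪JK x, y⟫ : ℂ) = ⟪x, JK y⟫ := by
    intro x y
    conv_lhs => rw [← hJKsa.adjoint_eq]
    exact ContinuousLinearMap.adjoint_inner_left JK y x
  have hJKinv : ∀ y : K, JK (JK y) = y := by
    intro y
    have := ContinuousLinearMap.ext_iff.mp hJK2 y
    simpa using this
  -- A is selfadjoint
  have hAapp : ∀ x : H, A x = ContinuousLinearMap.adjoint T (JK (T x)) := fun x => rfl
  have hAinner : ∀ u x : H, (⟪A u, x⟫ : ℂ) = ⟪JK (T u), T x⟫ := by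
    intro u x
    rw [hAapp]
    exact ContinuousLinearMap.adjoint_inner_left T x (JK (T u))
  have hsa : ∀ x y : H, (⟪A x, y⟫ : ℂ) = ⟪x, A y⟫ := by
    intro x y
    rw [hAinner, hJK, hAapp]
    exact (ContinuousLinearMap.adjoint_inner_right T x (JK (T y))).symm
  -- the key conjugation bridge
  have hbridge : ∀ x u : H, (⟪JK (T x), T u⟫ : ℂ) = (starRingEnd ℂ) ⟪A u, x⟫ := by
    intro x u
    rw [hAinner, hJK, ← inner_conj_symm]
  -- kernel of A equals kernel of T
  have hkerAT : ∀ x : H, A x = 0 ↔ T x = 0 := by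
    intro x
    constructor
    · intro h
      have h1 : ∀ y : H, (⟪JK (T x), T y⟫ : ℂ) = 0 := by
        intro y
        rw [← hAinner, h, inner_zero_left]
      have h2 : (⟪JK (T x), JK (T x)⟫ : ℂ) = 0 := by
        obtain ⟨y, hy⟩ := hT (JK (T x))
        have := h1 y
        rwa [hy] at this
      have h3 : JK (T x) = 0 := inner_self_eq_zero.mp h2
      have := congrArg JK h3
      rwa [hJKinv, map_zero] at this
    · intro h
      rw [hAapp, h, map_zero, map_zero]
  -- range A = (ker A)ᗮ
  have hkerEq : LinearMap.ker Am = LinearMap.ker (T : H →ₗ[ℂ] K) := by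
    ext x
    exact hkerAT x
  have hra : (LinearMap.range Am : Submodule ℂ H) = (LinearMap.ker Am)ᗮ := by
    have h1 : LinearMap.range Am = LinearMap.range ((ContinuousLinearMap.adjoint T : K →L[ℂ] H) : K →ₗ[ℂ] H) := by
      apply le_antisymm
      · rintro _ ⟨x, rfl⟩
        exact ⟨JK (T x), rfl⟩
      · rintro _ ⟨y, rfl⟩
        obtain ⟨x, hx⟩ := hT (JK y)
        refine ⟨x, ?_⟩
        show ContinuousLinearMap.adjoint T (JK (T x)) = ContinuousLinearMap.adjoint T y
        rw [hx, hJKinv]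
    rw [h1, range_adjoint_of_surj T hT, hkerEq]
  have hWc : IsClosed (W : Set H) := ContinuousLinearMap.isClosed_ker V
  -- membership in Q via inner products
  have memQ : ∀ x : H, x ∈ Q ↔ ∀ u : H, V u = 0 → (⟪A u, x⟫ : ℂ) = 0 := by
    intro x
    rw [hQdef, Submodule.mem_orthogonal]
    constructor
    · intro h u hu
      exact h (Am u) ⟨u, hu, rfl⟩
    · rintro h _ ⟨u, hu, rfl⟩
      exact h u hu
  -- the T-image description of the Krein orthogonal companion
  have hTQ : {y : K | ∀ u : H, V u = 0 → (⟪JK y, T u⟫ : ℂ) = 0} = T '' (Q : Set H) := by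
    ext y
    simp only [Set.mem_setOf_eq, Set.mem_image, SetLike.mem_coe]
    constructor
    · intro h
      obtain ⟨x, hx⟩ := hT y
      refine ⟨x, (memQ x).mpr fun u hu => ?_, hx⟩
      have h1 := h u hu
      rw [← hx] at h1
      have h2 : (starRingEnd ℂ) (⟪A u, x⟫ : ℂ) = 0 := by rw [← hbridge]; exact h1
      have h3 := congrArg (starRingEnd ℂ) h2
      simpa using h3
    · rintro ⟨x, hxQ, rfl⟩ u hu
      rw [hbridge, (memQ x).mp hxQ u hu, map_zero]
  -- image distributes over set addition
  have himg : ∀ S1 S2 : Set H, T '' S1 + T '' S2 = T '' (S1 + S2) := by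
    intro S1 S2
    ext z
    simp only [Set.mem_add, Set.mem_image]
    constructor
    · rintro ⟨_, ⟨a, ha, rfl⟩, _, ⟨b, hb, rfl⟩, rfl⟩
      exact ⟨a + b, ⟨a, ha, b, hb, rfl⟩, map_add T a b⟩
    · rintro ⟨_, ⟨a, ha, b, hb, rfl⟩, rfl⟩
      exact ⟨T a, ⟨a, ha, rfl⟩, T b, ⟨b, hb, rfl⟩, (map_add T a b).symm⟩
  have hWQcoe : ((W ⊔ Q : Submodule ℂ H) : Set H) = (W : Set H) + (Q : Set H) :=
    Submodule.coe_sup W Q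
  -- quotient map argument
  have hker_le_Q : ∀ x : H, T x = 0 → x ∈ Q := by
    intro x hx
    refine (memQ x).mpr fun u hu => ?_
    rw [hAinner, hx, inner_zero_right]
  have hpre : T ⁻¹' (T '' ((W ⊔ Q : Submodule ℂ H) : Set H)) =
      ((W ⊔ Q : Submodule ℂ H) : Set H) := by
    apply subset_antisymm
    · intro h hmem
      obtain ⟨x, hx, hTx⟩ := hmem
      have h1 : h - x ∈ Q := by
        apply hker_le_Q
        rw [map_sub, hTx, sub_self]
      have h2 : h = x + (h - x) := by abel
      rw [SetLike.mem_coe] at hx ⊢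
      rw [h2]
      exact Submodule.add_mem _ hx (Submodule.mem_sup_right h1)
    · exact Set.subset_preimage_image T _
  have hquot : Topology.IsQuotientMap T :=
    IsOpenMap.isQuotientMap (ContinuousLinearMap.isOpenMap T hT) T.continuous hT
  have part1 : IsClosed (T '' (LinearMap.ker (V : H →ₗ[ℂ] E) : Set H) +
      {y : K | ∀ u : H, V u = 0 → (⟪JK y, T u⟫ : ℂ) = 0}) ↔
      IsClosed ((LinearMap.ker (V : H →ₗ[ℂ] E) : Set H) + (TTkerVperp JK T V : Set H)) := by
    rw [hTQ, hQ_eq]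
    show IsClosed (T '' (W : Set H) + T '' (Q : Set H)) ↔ _
    rw [himg, ← hWQcoe]
    constructor
    · intro h
      have := h.preimage T.continuous
      rwa [hpre] at this
    · intro h
      exact (hquot.isClosed_preimage (s := T '' ((W ⊔ Q : Submodule ℂ H) : Set H))).mp
        (by rwa [hpre])
  refine ⟨part1, ?_⟩
  intro hcl
  have hclH : IsClosed ((W ⊔ Q : Submodule ℂ H) : Set H) := by
    rw [hWQcoe]
    exact part1.mp hcl
  -- main step
  rw [hN0_eq]
  apply Set.eq_univ_of_forall
  intro y
  obtain ⟨x, rfl⟩ := hT y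
  obtain ⟨n, hn, hperp⟩ := mainHilbert A hsa hra W hWc hclH x
  rw [Set.mem_add]
  refine ⟨T n, ⟨n, hn, rfl⟩, T (x - n), ?_, by rw [← map_add]; congr 1; abel⟩
  simp only [Set.mem_setOf_eq]
  rintro m ⟨n', hn', rfl⟩
  rw [hbridge]
  have : (⟪A n', x - n⟫ : ℂ) = 0 := by
    have := (Submodule.mem_orthogonal _ _).mp hperp (Am n') ⟨n', hn', rfl⟩
    exact this
  rw [this, map_zero]
end
end

section
/- Let T(ker V)^[⊥] := {y ∈ K : [y,Tu]_K = 0 for all u ∈ ker V}. Then T(ker V) + T(ker V)^[⊥] = K (i.e. T(ker V) is a regular subspace of K) if and only if H = ker V + ((T^#T)(ker V))^⊥, where ⊥ denotes the Hilbert orthogonal complement in H. -/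
open scoped ComplexInnerProductSpace Pointwise

noncomputable section

variable {H K E : Type*}
  [NormedAddCommGroup H] [InnerProductSpace ℂ H] [CompleteSpace H]
  [NormedAddCommGroup K] [InnerProductSpace ℂ K] [CompleteSpace K]
  [NormedAddCommGroup E] [InnerProductSpace ℂ E] [CompleteSpace E]

theorem stmt13
    (JK : K →L[ℂ] K) (hJKsa : IsSelfAdjoint JK) (hJK2 : JK ∘L JK = 1)
    (JE : E →L[ℂ] E) (hJEsa : IsSelfAdjoint JE) (hJE2 : JE ∘L JE = 1)
    (T : H →L[ℂ] K) (V : H →L[ℂ] E)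
    (hT : Function.Surjective T) (hV : Function.Surjective V) :
    (T '' (LinearMap.ker (V : H →ₗ[ℂ] E) : Set H) +
        {y : K | ∀ u : H, V u = 0 → ⟪JK y, T u⟫ = 0} = Set.univ) ↔
      ((LinearMap.ker (V : H →ₗ[ℂ] E) : Set H) +
        (((Submodule.map (((ContinuousLinearMap.adjoint T) ∘L JK ∘L T : H →L[ℂ] H) : H →ₗ[ℂ] H)
          (LinearMap.ker (V : H →ₗ[ℂ] E)))ᗮ : Set H)) = Set.univ) := by
  have hJK : ∀ a b : K, ⟪JK a, b⟫ = ⟪a, JK b⟫ := by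
    intro a b
    rw [← ContinuousLinearMap.adjoint_inner_left, hJKsa.adjoint_eq]
  constructor
  · intro h
    rw [Set.eq_univ_iff_forall] at h ⊢
    intro x
    obtain ⟨a, ha, b, hb, hab⟩ := Set.mem_add.mp (h (T x))
    obtain ⟨u, hu, rfl⟩ := ha
    refine Set.mem_add.mpr ⟨u, hu, x - u, ?_, by abel⟩
    rw [SetLike.mem_coe, Submodule.mem_orthogonal]
    rintro w ⟨n, hn, rfl⟩
    have hn' : V n = 0 := by simpa using hn
    have hTb : T (x - u) = b := by
      rw [map_sub, ← hab]; abel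
    simp only [ContinuousLinearMap.coe_coe, ContinuousLinearMap.comp_apply]
    rw [ContinuousLinearMap.adjoint_inner_left, hTb, hJK, ← inner_conj_symm,
      hb n hn', map_zero]
  · intro h
    rw [Set.eq_univ_iff_forall] at h ⊢
    intro y
    obtain ⟨x, rfl⟩ := hT y
    obtain ⟨u, hu, v, hv, hab⟩ := Set.mem_add.mp (h x)
    refine Set.mem_add.mpr ⟨T u, ⟨u, hu, rfl⟩, T v, ?_, by rw [← map_add, hab]⟩
    intro w hw
    have hmem : ((ContinuousLinearMap.adjoint T) ∘L JK ∘L T) w ∈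
        Submodule.map (((ContinuousLinearMap.adjoint T) ∘L JK ∘L T : H →L[ℂ] H) : H →ₗ[ℂ] H)
          (LinearMap.ker (V : H →ₗ[ℂ] E)) := ⟨w, by simpa using hw, rfl⟩
    have h0 := (Submodule.mem_orthogonal _ _).mp (SetLike.mem_coe.mp hv) _ hmem
    simp only [ContinuousLinearMap.coe_coe, ContinuousLinearMap.comp_apply] at h0
    rw [ContinuousLinearMap.adjoint_inner_left, hJK] at h0
    rw [hJK, ← inner_conj_symm, hJK, h0, map_zero]
end
end
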